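/- arXiv:2303.00447 — 7 statements merged into one kernel-verified Lean document; each statement's English description precedes it below -/
import Mathlib

section
/- Let Γ be a finite abelian group, R = ℤ[Γ], N_Γ the norm element, and R̄ = R/(N_Γ). For every short exact sequence of R-modules 0 → J → P → ℤ → 0, where ℤ carries the trivial Γ-action, the induced sequence 0 → R̄ ⊗_R J → R̄ ⊗_R P → ℤ/(#Γ)ℤ → 0 is exact (the last map being the composition of R̄ ⊗_R P → R̄ ⊗_R ℤ with the canonical isomorphism R̄ ⊗_R ℤ ≅ ℤ/(#Γ)ℤ). -/
set_option synthInstance.maxHeartbeats 1000000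
set_option maxHeartbeats 1000000

section Defs

variable (Γ : Type) [CommGroup Γ] [Fintype Γ]

/-- The augmentation map ℤ[Γ] → ℤ. -/
noncomputable def aug : MonoidAlgebra ℤ Γ →+* ℤ :=
  ((MonoidAlgebra.lift ℤ ℤ Γ) 1).toRingHom

/-- ℤ regarded as a ℤ[Γ]-module with trivial Γ-action (scalars act through the
augmentation, so every γ ∈ Γ acts as the identity). -/
noncomputable instance trivialIntModule : Module (MonoidAlgebra ℤ Γ) ℤ :=
  Module.compHom ℤ (aug Γ)

/-- The norm element N_Γ = Σ_{γ∈Γ} γ of ℤ[Γ]. -/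
noncomputable def normElt : MonoidAlgebra ℤ Γ := ∑ γ : Γ, MonoidAlgebra.of ℤ Γ γ

/-- R̄ = ℤ[Γ]/(N_Γ). -/
abbrev Rbar := MonoidAlgebra ℤ Γ ⧸ Ideal.span {normElt Γ}

/-- The canonical map ℤ/(#Γ)ℤ → R̄ ⊗_R ℤ, k ↦ k·(1 ⊗ 1); it realizes the canonical
isomorphism R̄ ⊗_R ℤ ≅ ℤ/(#Γ)ℤ. -/
noncomputable def canonicalMap (k : ZMod (Fintype.card Γ)) :
    TensorProduct (MonoidAlgebra ℤ Γ) (Rbar Γ) ℤ :=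
  k.val • ((1 : Rbar Γ) ⊗ₜ[MonoidAlgebra ℤ Γ] (1 : ℤ))

end Defs

section Aux

variable (Γ : Type) [CommGroup Γ] [Fintype Γ]

lemma aug_normElt : aug Γ (normElt Γ) = (Fintype.card Γ : ℤ) := by
  simp [aug, normElt, map_sum]

lemma smul_int_def (r : MonoidAlgebra ℤ Γ) (z : ℤ) : r • z = aug Γ r * z := rfl

end Aux

/- STATEMENT 1:
Γ a finite abelian group, R = ℤ[Γ], N_Γ the norm element, R̄ = R/(N_Γ).  For every short
exact sequence of R-modules 0 → J → P → ℤ → 0 (ℤ with trivial Γ-action), the induced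
sequence 0 → R̄ ⊗_R J → R̄ ⊗_R P → ℤ/(#Γ)ℤ → 0 is exact, the last map being the
composition of R̄ ⊗_R P → R̄ ⊗_R ℤ with the canonical isomorphism R̄ ⊗_R ℤ ≅ ℤ/(#Γ)ℤ.
(Equivalently, since the canonical map ℤ/(#Γ)ℤ → R̄ ⊗_R ℤ is an isomorphism: R̄ ⊗ J →
R̄ ⊗ P is injective, the pair (R̄ ⊗ J → R̄ ⊗ P, R̄ ⊗ P → R̄ ⊗ ℤ) is exact, R̄ ⊗ P → R̄ ⊗ ℤ
is surjective, and the canonical map is bijective.) -/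
theorem tensor_short_exact_sequence (Γ : Type) [CommGroup Γ] [Fintype Γ]
    (J P : Type) [AddCommGroup J] [AddCommGroup P]
    [Module (MonoidAlgebra ℤ Γ) J] [Module (MonoidAlgebra ℤ Γ) P]
    (f : J →ₗ[MonoidAlgebra ℤ Γ] P) (g : P →ₗ[MonoidAlgebra ℤ Γ] ℤ)
    (hf : Function.Injective f) (hfg : Function.Exact f g) (hg : Function.Surjective g) :
    Function.Injective (LinearMap.lTensor (Rbar Γ) f) ∧
      Function.Exact (LinearMap.lTensor (Rbar Γ) f) (LinearMap.lTensor (Rbar Γ) g) ∧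
      Function.Surjective (LinearMap.lTensor (Rbar Γ) g) ∧
      Function.Bijective (canonicalMap Γ) := by
  classical
  set R := MonoidAlgebra ℤ Γ with hR
  set I : Ideal R := Ideal.span {normElt Γ} with hI
  set N := normElt Γ with hN
  have hcard : (0:ℕ) < Fintype.card Γ := Fintype.card_pos
  haveI : NeZero (Fintype.card Γ) := ⟨hcard.ne'⟩
  -- the equivalences
  let eJ := TensorProduct.quotTensorEquivQuotSMul J I
  let eP := TensorProduct.quotTensorEquivQuotSMul P I
  let eZ := TensorProduct.quotTensorEquivQuotSMul ℤ I
  have hle : I • (⊤ : Submodule R J) ≤ (I • (⊤ : Submodule R P)).comap f := by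
    rw [← Submodule.map_le_iff_le_comap, Submodule.map_smul'']
    exact Submodule.smul_mono (le_refl I) le_top
  let fbar : (J ⧸ I • (⊤ : Submodule R J)) →ₗ[R] (P ⧸ I • (⊤ : Submodule R P)) :=
    Submodule.mapQ _ _ f hle
  have hnat : ∀ x, eP (LinearMap.lTensor (Rbar Γ) f x) = fbar (eJ x) := by
    intro x
    have : (eP.toLinearMap ∘ₗ LinearMap.lTensor (Rbar Γ) f)
        = (fbar ∘ₗ eJ.toLinearMap) := by
      apply TensorProduct.ext'
      intro rb j
      obtain ⟨r, rfl⟩ := Ideal.Quotient.mk_surjective rb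
      simp only [LinearMap.coe_comp, Function.comp_apply, LinearEquiv.coe_coe,
        LinearMap.lTensor_tmul]
      rw [TensorProduct.quotTensorEquivQuotSMul_mk_tmul, TensorProduct.quotTensorEquivQuotSMul_mk_tmul,
        Submodule.mapQ_apply, map_smul]
    exact LinearMap.congr_fun this x
  have hNmem : ∀ {M : Type} [AddCommGroup M] [Module R M] (m : M),
      N • m ∈ I • (⊤ : Submodule R M) := by
    intro M _ _ m
    rw [hI, Submodule.ideal_span_singleton_smul]
    exact Submodule.smul_mem_pointwise_smul m N ⊤ trivial
  have hNmem' : ∀ {M : Type} [AddCommGroup M] [Module R M] (m : M),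
      m ∈ I • (⊤ : Submodule R M) → ∃ m', N • m' = m := by
    intro M _ _ m hm
    rw [hI, Submodule.ideal_span_singleton_smul, ← SetLike.mem_coe,
      Submodule.coe_pointwise_smul] at hm
    obtain ⟨m', -, hm'⟩ := hm
    exact ⟨m', hm'⟩
  -- injectivity of fbar
  have hfbar : Function.Injective fbar := by
    rw [injective_iff_map_eq_zero]
    intro x hx
    obtain ⟨j, rfl⟩ := Submodule.Quotient.mk_surjective _ x
    rw [show fbar = Submodule.mapQ _ _ f hle from rfl, Submodule.mapQ_apply,
      Submodule.Quotient.mk_eq_zero] at hx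
    obtain ⟨p, hp⟩ := hNmem' _ hx
    have hgp : (Fintype.card Γ : ℤ) * g p = 0 := by
      have h0 : g (f j) = 0 := hfg.apply_apply_eq_zero j
      rw [← hp, map_smul, smul_int_def, aug_normElt] at h0
      exact h0
    have hgp0 : g p = 0 := by
      have := mul_eq_zero.mp hgp
      rcases this with h | h
      · exact absurd h (by exact_mod_cast hcard.ne')
      · exact h
    obtain ⟨j', rfl⟩ := (hfg p).mp hgp0
    have : f (N • j') = f j := by rw [map_smul, hp]
    have hj : j = N • j' := (hf this).symm
    rw [Submodule.Quotient.mk_eq_zero, hj]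
    exact hNmem j'
  constructor
  · -- injectivity of lTensor f
    intro x y hxy
    have : fbar (eJ x) = fbar (eJ y) := by rw [← hnat, ← hnat, hxy]
    exact eJ.injective (hfbar this)
  refine ⟨lTensor_exact (Rbar Γ) hfg hg, LinearMap.lTensor_surjective (Rbar Γ) hg, ?_⟩
  -- bijectivity of canonicalMap
  have h11 : eZ ((1 : Rbar Γ) ⊗ₜ[R] (1 : ℤ)) = Submodule.Quotient.mk 1 := by
    rw [show (1 : Rbar Γ) = Ideal.Quotient.mk I 1 from rfl,
      TensorProduct.quotTensorEquivQuotSMul_mk_tmul, one_smul]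
  have hcan : ∀ k : ZMod (Fintype.card Γ),
      eZ (canonicalMap Γ k) = Submodule.Quotient.mk (k.val : ℤ) := by
    intro k
    rw [canonicalMap, map_nsmul, h11, ← Submodule.Quotient.mk_smul]
    norm_num
  -- images of integers in the quotient agree iff congruent mod card
  have hmk : ∀ a b : ℤ, (a : ZMod (Fintype.card Γ)) = (b : ZMod (Fintype.card Γ)) →
      (Submodule.Quotient.mk a : ℤ ⧸ I • (⊤ : Submodule R ℤ)) = Submodule.Quotient.mk b := by
    intro a b hab
    rw [Submodule.Quotient.eq]
    have hdvd : (Fintype.card Γ : ℤ) ∣ a - b := by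
      rwa [← ZMod.intCast_zmod_eq_zero_iff_dvd, Int.cast_sub, sub_eq_zero]
    obtain ⟨m, hm⟩ := hdvd
    have : a - b = N • m := by rw [smul_int_def, hN, aug_normElt, ← hm]
    rw [this]
    exact hNmem m
  have hmk' : ∀ a b : ℤ,
      (Submodule.Quotient.mk a : ℤ ⧸ I • (⊤ : Submodule R ℤ)) = Submodule.Quotient.mk b →
      (a : ZMod (Fintype.card Γ)) = (b : ZMod (Fintype.card Γ)) := by
    intro a b hab
    rw [Submodule.Quotient.eq] at hab
    obtain ⟨m, hm⟩ := hNmem' _ hab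
    rw [smul_int_def, hN, aug_normElt] at hm
    have hdvd : (Fintype.card Γ : ℤ) ∣ a - b := ⟨m, hm.symm⟩
    have h0 := (ZMod.intCast_zmod_eq_zero_iff_dvd _ _).mpr hdvd
    rwa [Int.cast_sub, sub_eq_zero] at h0
  constructor
  · -- injective
    intro k k' hkk
    have h := congrArg eZ hkk
    rw [hcan, hcan] at h
    have := hmk' _ _ h
    rwa [Int.cast_natCast, Int.cast_natCast, ZMod.natCast_val, ZMod.natCast_val,
      ZMod.cast_id, ZMod.cast_id] at this
  · -- surjective
    intro x
    obtain ⟨a, ha⟩ := Submodule.Quotient.mk_surjective _ (eZ x)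
    refine ⟨(a : ZMod (Fintype.card Γ)), eZ.injective ?_⟩
    rw [hcan, ← ha]
    apply hmk
    rw [Int.cast_natCast, ZMod.natCast_val, ZMod.cast_id]
end

section
/- Let V be a finite nonempty set and let L : V × V → ℤ be an integer Laplacian-type matrix (symmetric, L(v,w) ≤ 0 for v ≠ w, all row sums zero) whose support graph is connected. Then the kernel of the induced ℤ-linear endomorphism L : ℤ^V → ℤ^V is exactly ℤ·𝟙, the span of the all-ones vector; consequently the complex 0 → ℤ → ℤ^V → ℤ^V → ℤ → 0, where the first map sends 1 to 𝟙, the middle map is L, and the last map is deg (the sum of coordinates), is exact everywhere except at the right-hand copy of ℤ^V, where the homology group ker(deg)/L(ℤ^V) is finite. -/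
open Finset

/-- Any vector (over a linearly ordered comm ring) in the kernel of a connected
Laplacian-type integer matrix is constant. -/
lemma laplacian_ker_const {V : Type} [Fintype V] [Nonempty V] (L : V → V → ℤ)
    (hsymm : ∀ v w, L v w = L w v)
    (hoffdiag : ∀ v w, v ≠ w → L v w ≤ 0)
    (hrowsum : ∀ v, ∑ w, L v w = 0)
    (hconn : (SimpleGraph.fromRel fun v w => L v w ≠ 0).Connected)
    {R : Type} [CommRing R] [LinearOrder R] [IsStrictOrderedRing R]
    (x : V → R) (hx : ∀ v, ∑ w, (L v w : R) * x w = 0) (v w : V) : x v = x w := by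
  obtain ⟨v0, -, hv0⟩ := Finset.exists_mem_eq_sup' (Finset.univ_nonempty (α := V)) x
  set M : R := Finset.univ.sup' Finset.univ_nonempty x with hM
  have hle : ∀ u : V, x u ≤ M := fun u => Finset.le_sup' x (Finset.mem_univ u)
  have step : ∀ a b : V, (SimpleGraph.fromRel fun v w => L v w ≠ 0).Adj a b →
      x a = M → x b = M := by
    intro a b hadj ha
    rw [SimpleGraph.fromRel_adj] at hadj
    obtain ⟨hne, hLab⟩ := hadj
    have hLab : L a b ≠ 0 := by
      rcases hLab with h | h
      · exact h
      · rw [hsymm]; exact h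
    have h0 : ∑ w, (L a w : R) * (x w - M) = 0 := by
      have hsum : ((∑ w, L a w : ℤ) : R) = 0 := by rw [hrowsum]; norm_num
      push_cast at hsum
      calc ∑ w, (L a w : R) * (x w - M)
          = ∑ w, (L a w : R) * x w - (∑ w, (L a w : R)) * M := by
            rw [Finset.sum_mul, ← Finset.sum_sub_distrib]; simp [mul_sub]
        _ = 0 := by rw [hx a, hsum]; ring
    have hnn : ∀ u ∈ Finset.univ, (0 : R) ≤ (L a u : R) * (x u - M) := by
      intro u _
      rcases eq_or_ne u a with rfl | hua
      · rw [ha]; simp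
      · exact mul_nonneg_of_nonpos_of_nonpos (by exact_mod_cast hoffdiag a u (Ne.symm hua))
          (sub_nonpos.2 (hle u))
    have := (Finset.sum_eq_zero_iff_of_nonneg hnn).1 h0 b (Finset.mem_univ b)
    have hcast : (L a b : R) ≠ 0 := Int.cast_ne_zero.2 hLab
    have := (mul_eq_zero.1 this).resolve_left hcast
    linarith [sub_eq_zero.1 this]
  have walkind : ∀ a b : V, (SimpleGraph.fromRel fun v w => L v w ≠ 0).Walk a b →
      x a = M → x b = M := by
    intro a b p
    induction p with
    | nil => exact id
    | cons h p ih => exact fun ha => ih (step _ _ h ha)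
  have hall : ∀ u : V, x u = M := by
    intro u
    obtain ⟨p⟩ := hconn.preconnected v0 u
    exact walkind v0 u p hv0.symm
  rw [hall v, hall w]


/- STATEMENT 2:
V a finite nonempty set, L : V × V → ℤ an integer Laplacian-type matrix (symmetric,
nonpositive off-diagonal, zero row sums) whose support graph (v ~ w iff v ≠ w and
L v w ≠ 0) is connected.  Then ker(L : ℤ^V → ℤ^V) = ℤ·𝟙, and the complex
0 → ℤ →(ι) ℤ^V →(L) ℤ^V →(deg) ℤ → 0 (ι(1) = 𝟙, deg = sum of coordinates) is a complex
that is exact everywhere except at the right-hand ℤ^V, where the homology group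
ker(deg)/L(ℤ^V) is finite. -/
theorem laplacian_complex_exactness
    (V : Type) [Fintype V] [Nonempty V] (L : V → V → ℤ)
    (hsymm : ∀ v w, L v w = L w v)
    (hoffdiag : ∀ v w, v ≠ w → L v w ≤ 0)
    (hrowsum : ∀ v, ∑ w, L v w = 0)
    (hconn : (SimpleGraph.fromRel fun v w => L v w ≠ 0).Connected) :
    letI Lmap : (V → ℤ) →ₗ[ℤ] (V → ℤ) := Matrix.mulVecLin (Matrix.of L)
    letI degMap : (V → ℤ) →ₗ[ℤ] ℤ := ∑ v : V, LinearMap.proj v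
    letI ι : ℤ →ₗ[ℤ] (V → ℤ) := LinearMap.toSpanSingleton ℤ (V → ℤ) (fun _ => 1)
    -- the sequence is a complex:
    (Lmap (fun _ => 1) = 0) ∧ (∀ x, degMap (Lmap x) = 0) ∧
    -- exactness at the left ℤ:
    Function.Injective ι ∧
    -- the kernel of L is exactly ℤ·𝟙 (= image of ι), i.e. exactness at the left ℤ^V:
    LinearMap.ker Lmap = Submodule.span ℤ {(fun _ => 1 : V → ℤ)} ∧
    -- exactness at the right ℤ:
    Function.Surjective degMap ∧
    -- the homology at the right ℤ^V, i.e. ker(deg)/L(ℤ^V), is finite: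
    Finite ((LinearMap.ker degMap) ⧸
      (Submodule.comap (LinearMap.ker degMap).subtype (LinearMap.range Lmap))) := by
  classical
  set Lmap : (V → ℤ) →ₗ[ℤ] (V → ℤ) := Matrix.mulVecLin (Matrix.of L) with hLmapdef
  set degMap : (V → ℤ) →ₗ[ℤ] ℤ := ∑ v : V, LinearMap.proj v with hdegdef
  have hLapply : ∀ (x : V → ℤ) (v : V), Lmap x v = ∑ w, L v w * x w := by
    intro x v
    simp [Lmap, Matrix.mulVecLin_apply, Matrix.mulVec, dotProduct]
  have hdegapply : ∀ (x : V → ℤ), degMap x = ∑ v, x v := by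
    intro x; simp [degMap, LinearMap.sum_apply, LinearMap.proj_apply]
  have hcolsum : ∀ w, ∑ v, L v w = 0 := by
    intro w
    rw [Finset.sum_congr rfl fun v _ => hsymm v w, hrowsum]
  -- part 1
  have h1 : Lmap (fun _ => 1) = 0 := by
    funext v
    simp [hLapply, hrowsum v]
  -- part 2
  have h2 : ∀ x, degMap (Lmap x) = 0 := by
    intro x
    rw [hdegapply]
    simp only [hLapply]
    rw [Finset.sum_comm]
    refine Finset.sum_eq_zero fun w _ => ?_
    rw [← Finset.sum_mul, hcolsum, zero_mul]
  -- part 3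
  have h3 : Function.Injective (LinearMap.toSpanSingleton ℤ (V → ℤ) (fun _ => 1)) := by
    intro a b hab
    simpa [LinearMap.toSpanSingleton_apply] using congrFun hab (Classical.arbitrary V)
  -- part 4
  have h4 : LinearMap.ker Lmap = Submodule.span ℤ {(fun _ => 1 : V → ℤ)} := by
    apply le_antisymm
    · intro x hx
      rw [LinearMap.mem_ker] at hx
      have hcon : ∀ v w, x v = x w :=
        laplacian_ker_const L hsymm hoffdiag hrowsum hconn x
          (fun v => by
            have := congrFun hx v
            rw [hLapply] at this
            simpa using this)
      rw [Submodule.mem_span_singleton]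
      refine ⟨x (Classical.arbitrary V), ?_⟩
      funext v
      simpa using hcon (Classical.arbitrary V) v
    · rw [Submodule.span_singleton_le_iff_mem]
      exact LinearMap.mem_ker.2 h1
  -- part 5
  have h5 : Function.Surjective degMap := by
    intro n
    refine ⟨Pi.single (Classical.arbitrary V) n, ?_⟩
    rw [hdegapply]
    simp [Finset.sum_pi_single']
  -- part 6
  have h6 : Finite ((LinearMap.ker degMap) ⧸
      (Submodule.comap (LinearMap.ker degMap).subtype (LinearMap.range Lmap))) := by
    set Lq : (V → ℚ) →ₗ[ℚ] (V → ℚ) :=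
      Matrix.mulVecLin (Matrix.of fun v w => (L v w : ℚ)) with hLqdef
    set degq : (V → ℚ) →ₗ[ℚ] ℚ := ∑ v : V, LinearMap.proj v with hdegqdef
    have hLqapply : ∀ (y : V → ℚ) (v : V), Lq y v = ∑ w, (L v w : ℚ) * y w := by
      intro y v
      simp [Lq, Matrix.mulVecLin_apply, Matrix.mulVec, dotProduct]
    have hdegqapply : ∀ (y : V → ℚ), degq y = ∑ v, y v := by
      intro y; simp [degq, LinearMap.sum_apply, LinearMap.proj_apply]
    have hrowsumq : ∀ v, ∑ w, (L v w : ℚ) = 0 := by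
      intro v; exact_mod_cast congrArg (Int.cast : ℤ → ℚ) (hrowsum v)
    have hcolsumq : ∀ w, ∑ v, (L v w : ℚ) = 0 := by
      intro w; exact_mod_cast congrArg (Int.cast : ℤ → ℚ) (hcolsum w)
    -- kernel of Lq is the span of 𝟙
    have hone_ne : (fun _ => (1:ℚ) : V → ℚ) ≠ 0 := by
      intro h
      exact one_ne_zero (congrFun h (Classical.arbitrary V))
    have hkerq : LinearMap.ker Lq = Submodule.span ℚ {(fun _ => 1 : V → ℚ)} := by
      apply le_antisymm
      · intro y hy
        rw [LinearMap.mem_ker] at hy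
        have hcon : ∀ v w, y v = y w :=
          laplacian_ker_const L hsymm hoffdiag hrowsum hconn y
            (fun v => by
              have := congrFun hy v
              rw [hLqapply] at this
              simpa using this)
        rw [Submodule.mem_span_singleton]
        refine ⟨y (Classical.arbitrary V), ?_⟩
        funext v
        simpa using hcon (Classical.arbitrary V) v
      · rw [Submodule.span_singleton_le_iff_mem, LinearMap.mem_ker]
        funext v
        rw [hLqapply]
        simpa using hrowsumq v
    have hdegq_surj : Function.Surjective degq := by
      intro n
      refine ⟨Pi.single (Classical.arbitrary V) n, ?_⟩
      rw [hdegqapply]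
      simp [Finset.sum_pi_single']
    have hrange_le : LinearMap.range Lq ≤ LinearMap.ker degq := by
      rintro - ⟨y, rfl⟩
      rw [LinearMap.mem_ker, hdegqapply]
      simp only [hLqapply]
      rw [Finset.sum_comm]
      refine Finset.sum_eq_zero fun w _ => ?_
      rw [← Finset.sum_mul, hcolsumq, zero_mul]
    -- finrank computations
    have hfr1 : Module.finrank ℚ (LinearMap.ker Lq) = 1 := by
      rw [hkerq]
      exact finrank_span_singleton hone_ne
    have hfr2 : Module.finrank ℚ (LinearMap.range Lq) + 1 = Fintype.card V := by
      have := LinearMap.finrank_range_add_finrank_ker Lq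
      rw [hfr1, Module.finrank_fintype_fun_eq_card] at this
      exact this
    have hfr3 : Module.finrank ℚ (LinearMap.ker degq) + 1 = Fintype.card V := by
      have := LinearMap.finrank_range_add_finrank_ker degq
      rw [LinearMap.range_eq_top.2 hdegq_surj] at this
      rw [Module.finrank_fintype_fun_eq_card] at this
      rw [add_comm]
      simpa [finrank_top] using this
    have heq : LinearMap.range Lq = LinearMap.ker degq :=
      Submodule.eq_of_le_of_finrank_le hrange_le (by omega)
    -- now torsion
    haveI : Module.Finite ℤ ↥(LinearMap.ker degMap) :=
      Module.Finite.iff_fg.mpr (IsNoetherian.noetherian _)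
    apply Module.finite_of_fg_torsion
    intro q
    obtain ⟨⟨x, hx⟩, rfl⟩ := Submodule.Quotient.mk_surjective _ q
    rw [LinearMap.mem_ker, hdegapply] at hx
    have hxq : (fun v => (x v : ℚ)) ∈ LinearMap.ker degq := by
      rw [LinearMap.mem_ker, hdegqapply]
      exact_mod_cast congrArg (Int.cast : ℤ → ℚ) hx
    rw [← heq] at hxq
    obtain ⟨y, hy⟩ := hxq
    set n : ℤ := ∏ v, ((y v).den : ℤ) with hn
    have hn0 : n ≠ 0 := by
      rw [hn]
      exact Finset.prod_ne_zero_iff.2 fun v _ => Int.natCast_ne_zero.2 (y v).den_nz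
    have hint : ∀ w, ∃ m : ℤ, (m : ℚ) = (n : ℚ) * y w := by
      intro w
      refine ⟨(y w).num * ∏ v ∈ Finset.univ.erase w, ((y v).den : ℤ), ?_⟩
      have hd : ((y w).den : ℚ) ≠ 0 := by
        exact_mod_cast (y w).den_nz
      have hnum : ((y w).num : ℚ) = ((y w).den : ℚ) * y w := by
        rw [eq_comm, mul_comm, Rat.mul_den_eq_num]
      have hprod : (n : ℚ) = ((y w).den : ℚ) * ∏ v ∈ Finset.univ.erase w, ((y v).den : ℚ) := by
        rw [hn]
        push_cast
        exact (Finset.mul_prod_erase Finset.univ (fun v => ((y v).den : ℚ))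
          (Finset.mem_univ w)).symm
      push_cast
      rw [hprod, hnum]
      ring
    choose z hz using hint
    have hLz : Lmap z = n • x := by
      funext v
      have hq : ((∑ w, L v w * z w : ℤ) : ℚ) = ((n * x v : ℤ) : ℚ) := by
        push_cast
        calc ∑ w, (L v w : ℚ) * (z w : ℚ)
            = ∑ w, (L v w : ℚ) * ((n : ℚ) * y w) := by
              exact Finset.sum_congr rfl fun w _ => by rw [hz w]
          _ = (n : ℚ) * ∑ w, (L v w : ℚ) * y w := by
              rw [Finset.mul_sum]
              exact Finset.sum_congr rfl fun w _ => by ring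
          _ = (n : ℚ) * (x v : ℚ) := by
              rw [← hLqapply y v, congrFun hy v]
      have := Int.cast_injective (α := ℚ) hq
      rw [hLapply]
      simpa using this
    refine ⟨⟨n, mem_nonZeroDivisors_of_ne_zero hn0⟩, ?_⟩
    rw [Submonoid.mk_smul, ← Submodule.Quotient.mk_smul, Submodule.Quotient.mk_eq_zero]
    rw [Submodule.mem_comap]
    exact ⟨z, hLz⟩
  exact ⟨h1, h2, h3, h4, h5, h6⟩
end

section
/- Let Γ be a finite group acting freely on a finite nonempty set V, and let L : V × V → ℤ be a Γ-equivariant integer Laplacian-type matrix (symmetric, nonpositive off-diagonal entries, zero row sums, and L(γ·v, γ·w) = L(v,w) for all γ, v, w) whose support graph is connected. Let N_Γ act on ℤ^V by N_Γ·x = Σ_{γ∈Γ} γ·x, and set Jac := ker(deg)/L(ℤ^V). Then L maps the subgroup N_Γ·ℤ^V into itself, and the homomorphism {x ∈ N_Γ·ℤ^V : deg(x) = 0} / L(N_Γ·ℤ^V) → Jac induced by the inclusion is injective with image exactly N_Γ·Jac. (The source is canonically the Jacobian group Jac(X) of the quotient graph X = Y/Γ, so Jac(X) ≅ N_Γ·Jac(Y).)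 -/
/- Auxiliary definitions for STATEMENT 3.
V is a finite set; ℤ^V = V → ℤ; deg is the sum of coordinates; a matrix L : V × V → ℤ acts
on ℤ^V by (Lx)(v) = Σ_w L(v,w)x(w); a group Γ acting on V acts on ℤ^V by
(γ•x)(v) = x(γ⁻¹•v), and N_Γ acts by N_Γ•x = Σ_γ γ•x.  The Jacobian-type group attached
to L is Jac = ker(deg)/L(ℤ^V). -/

section Defs

variable (V : Type) [Fintype V] (Γ : Type) [Group Γ] [Fintype Γ] [MulAction Γ V]

/-- deg : ℤ^V → ℤ, the sum of coordinates. -/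
noncomputable def degMap : (V → ℤ) →ₗ[ℤ] ℤ := ∑ v : V, LinearMap.proj v

/-- The endomorphism of ℤ^V given by the matrix L. -/
noncomputable def lapMap (L : V → V → ℤ) : (V → ℤ) →ₗ[ℤ] (V → ℤ) :=
  Matrix.mulVecLin (Matrix.of L)

/-- The action of γ ∈ Γ on ℤ^V : (γ • x)(v) = x(γ⁻¹ • v). -/
noncomputable def actMap (γ : Γ) : (V → ℤ) →ₗ[ℤ] (V → ℤ) :=
  LinearMap.funLeft ℤ ℤ fun v => γ⁻¹ • v

/-- The action of the norm element N_Γ on ℤ^V : N_Γ • x = Σ_γ γ • x. -/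
noncomputable def normMap : (V → ℤ) →ₗ[ℤ] (V → ℤ) := ∑ γ : Γ, actMap V Γ γ

/-- Jac = ker(deg)/L(ℤ^V). -/
noncomputable abbrev jacQuot (L : V → V → ℤ) :=
  ↥(LinearMap.ker (degMap V)) ⧸
    Submodule.comap (LinearMap.ker (degMap V)).subtype (LinearMap.range (lapMap V L))

/-- The projection ker(deg) → Jac. -/
noncomputable def jacMk (L : V → V → ℤ) :
    ↥(LinearMap.ker (degMap V)) →ₗ[ℤ] jacQuot V L :=
  Submodule.mkQ _

/-- The subgroup {x ∈ N_Γ·ℤ^V : deg x = 0}. -/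
noncomputable def subK : Submodule ℤ (V → ℤ) :=
  LinearMap.range (normMap V Γ) ⊓ LinearMap.ker (degMap V)

/-- The subgroup L(N_Γ·ℤ^V), viewed inside {x ∈ N_Γ·ℤ^V : deg x = 0}. -/
noncomputable def srcSub (L : V → V → ℤ) : Submodule ℤ ↥(subK V Γ) :=
  Submodule.comap (subK V Γ).subtype
    (Submodule.map (lapMap V L) (LinearMap.range (normMap V Γ)))

/-- The homomorphism {x ∈ N_Γ·ℤ^V : deg x = 0}/L(N_Γ·ℤ^V) → Jac induced by the
inclusion. -/
noncomputable def inducedMap (L : V → V → ℤ) :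
    (↥(subK V Γ) ⧸ srcSub V Γ L) →ₗ[ℤ] jacQuot V L :=
  Submodule.mapQ _ _ (Submodule.inclusion (inf_le_right (a := LinearMap.range (normMap V Γ))))
    (by
      rintro ⟨x, hx⟩ hmem
      obtain ⟨y, -, hy⟩ := hmem
      exact ⟨y, hy.trans rfl⟩)

lemma normMap_mem_ker_degMap (x : V → ℤ) (hx : x ∈ LinearMap.ker (degMap V)) :
    normMap V Γ x ∈ LinearMap.ker (degMap V) := by
  simp only [LinearMap.mem_ker] at hx ⊢
  have hdeg : ∀ y : V → ℤ, degMap V y = ∑ v, y v := by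
    intro y
    simp [degMap]
  have hact : ∀ γ : Γ, degMap V (actMap V Γ γ x) = degMap V x := by
    intro γ
    rw [hdeg, hdeg]
    exact Fintype.sum_equiv (MulAction.toPerm γ⁻¹) _ _ fun v => rfl
  rw [normMap, LinearMap.sum_apply, map_sum]
  simp [hact, hx]

/-- The composite ker(deg) → ker(deg) → Jac given by x ↦ class of N_Γ•x ; its range is
N_Γ·Jac. -/
noncomputable def normOnJac (L : V → V → ℤ) :
    ↥(LinearMap.ker (degMap V)) →ₗ[ℤ] jacQuot V L :=
  (jacMk V L).comp ((normMap V Γ).restrict (normMap_mem_ker_degMap V Γ))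

end Defs

section AuxLemmas

variable (V : Type) [Fintype V] (Γ : Type) [Group Γ] [Fintype Γ] [MulAction Γ V]

lemma degMap_apply' (x : V → ℤ) : degMap V x = ∑ v, x v := by
  simp [degMap]

lemma lapMap_apply' (L : V → V → ℤ) (x : V → ℤ) (v : V) :
    lapMap V L x v = ∑ w, L v w * x w := by
  simp [lapMap, Matrix.mulVecLin_apply, Matrix.mulVec, dotProduct]

lemma actMap_apply' (γ : Γ) (x : V → ℤ) (v : V) : actMap V Γ γ x v = x (γ⁻¹ • v) := rfl

lemma normMap_apply' (x : V → ℤ) (v : V) :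
    normMap V Γ x v = ∑ γ : Γ, x (γ⁻¹ • v) := by
  simp [normMap, actMap_apply']

lemma lap_norm_comm (L : V → V → ℤ) (hequiv : ∀ (γ : Γ) (v w : V), L (γ • v) (γ • w) = L v w)
    (x : V → ℤ) : lapMap V L (normMap V Γ x) = normMap V Γ (lapMap V L x) := by
  funext v
  rw [lapMap_apply', normMap_apply']
  simp only [normMap_apply', lapMap_apply', Finset.mul_sum]
  rw [Finset.sum_comm]
  refine Finset.sum_congr rfl fun γ _ => ?_
  rw [← Equiv.sum_comp (MulAction.toPerm γ) (fun w => L v w * x (γ⁻¹ • w))]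
  refine Finset.sum_congr rfl fun w _ => ?_
  simp only [MulAction.toPerm_apply, inv_smul_smul]
  have h := hequiv γ⁻¹ v (γ • w)
  rw [inv_smul_smul] at h
  rw [← h]

lemma normMap_norm_norm' (x : V → ℤ) :
    normMap V Γ (normMap V Γ x) = (Fintype.card Γ : ℤ) • normMap V Γ x := by
  funext v
  simp only [normMap_apply', Pi.smul_apply, smul_eq_mul]
  calc ∑ γ : Γ, ∑ δ : Γ, x (δ⁻¹ • γ⁻¹ • v)
      = ∑ _γ : Γ, ∑ δ : Γ, x (δ⁻¹ • v) := by
        refine Finset.sum_congr rfl fun γ _ => ?_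
        rw [← Equiv.sum_comp (Equiv.mulLeft γ⁻¹) (fun δ : Γ => x (δ⁻¹ • γ⁻¹ • v))]
        refine Finset.sum_congr rfl fun δ _ => ?_
        simp [mul_inv_rev, mul_smul]
    _ = (Fintype.card Γ : ℤ) * ∑ δ : Γ, x (δ⁻¹ • v) := by
        rw [Finset.sum_const, Finset.card_univ, nsmul_eq_mul]

lemma deg_norm' (x : V → ℤ) :
    degMap V (normMap V Γ x) = (Fintype.card Γ : ℤ) * degMap V x := by
  rw [degMap_apply', degMap_apply']
  simp only [normMap_apply']
  rw [Finset.sum_comm]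
  have : ∀ γ : Γ, ∑ v : V, x (γ⁻¹ • v) = ∑ v : V, x v := fun γ =>
    Fintype.sum_equiv (MulAction.toPerm γ⁻¹) _ _ fun v => rfl
  rw [Finset.sum_congr rfl fun γ _ => this γ, Finset.sum_const, Finset.card_univ,
    nsmul_eq_mul]

lemma lap_ker_const' (L : V → V → ℤ)
    (hsymm : ∀ v w, L v w = L w v)
    (hoffdiag : ∀ v w, v ≠ w → L v w ≤ 0)
    (hrowsum : ∀ v, ∑ w, L v w = 0)
    (hconn : (SimpleGraph.fromRel fun v w => L v w ≠ 0).Connected)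
    (x : V → ℤ) (hx : lapMap V L x = 0) (v w : V) : x v = x w := by
  have hne : (Finset.univ : Finset V).Nonempty := ⟨v, Finset.mem_univ v⟩
  obtain ⟨v₀, -, hv₀⟩ := Finset.exists_max_image Finset.univ x hne
  have hstep : ∀ u, x u = x v₀ → ∀ w', L u w' ≠ 0 → x w' = x v₀ := by
    intro u hu w' hw'
    have hLu : ∑ a, L u a * x a = 0 := by
      have := congrFun hx u
      rw [lapMap_apply'] at this
      simpa using this
    have h0 : ∑ a, L u a * (x a - x v₀) = 0 := by
      have h2 : ∑ a, L u a * x v₀ = 0 := by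
        rw [← Finset.sum_mul, hrowsum, zero_mul]
      calc ∑ a, L u a * (x a - x v₀)
          = (∑ a, L u a * x a) - ∑ a, L u a * x v₀ := by
            rw [← Finset.sum_sub_distrib]
            exact Finset.sum_congr rfl fun a _ => by ring
        _ = 0 := by rw [hLu, h2, sub_zero]
    have hnn : ∀ a ∈ Finset.univ, (0:ℤ) ≤ L u a * (x a - x v₀) := by
      intro a _
      rcases eq_or_ne a u with rfl | hau
      · rw [hu, sub_self, mul_zero]
      · have h1 : L u a ≤ 0 := hoffdiag u a (Ne.symm hau)
        have h2 : x a - x v₀ ≤ 0 := by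
          have := hv₀ a (Finset.mem_univ a); omega
        nlinarith
    have := (Finset.sum_eq_zero_iff_of_nonneg hnn).mp h0 w' (Finset.mem_univ w')
    rcases mul_eq_zero.mp this with h | h
    · exact absurd h hw'
    · omega
  have key : ∀ (a b : V), (SimpleGraph.fromRel fun v w => L v w ≠ 0).Walk a b →
      x a = x v₀ → x b = x v₀ := by
    intro a b p
    induction p with
    | nil => exact id
    | @cons a c b hadj p ih =>
      intro ha
      apply ih
      rw [SimpleGraph.fromRel_adj] at hadj
      rcases hadj.2 with h | h
      · exact hstep a ha c h
      · exact hstep a ha c (by rw [hsymm]; exact h)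
  obtain ⟨p⟩ := hconn.preconnected v₀ v
  obtain ⟨q⟩ := hconn.preconnected v₀ w
  rw [key v₀ v p rfl, key v₀ w q rfl]

lemma norm_range_of_fixed' (hfree : ∀ (γ : Γ) (v : V), γ • v = v → γ = 1)
    (z : V → ℤ) (hz : normMap V Γ z = (Fintype.card Γ : ℤ) • z) :
    z ∈ LinearMap.range (normMap V Γ) := by
  classical
  have hconst : ∀ (γ : Γ) (v : V), z (γ • v) = z v := by
    intro γ v
    have h1 : normMap V Γ z (γ • v) = normMap V Γ z v := by
      rw [normMap_apply', normMap_apply']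
      rw [← Equiv.sum_comp (Equiv.mulLeft γ) (fun δ : Γ => z (δ⁻¹ • γ • v))]
      refine Finset.sum_congr rfl fun δ _ => ?_
      simp [mul_inv_rev, mul_smul]
    have h2 := congrFun hz (γ • v)
    have h3 := congrFun hz v
    simp only [Pi.smul_apply, smul_eq_mul] at h2 h3
    have hcard : ((Fintype.card Γ : ℤ)) ≠ 0 := by
      have : 0 < Fintype.card Γ := Fintype.card_pos
      exact_mod_cast this.ne'
    exact mul_left_cancel₀ hcard (by rw [← h2, ← h3, h1])
  set rep : V → V := fun v => (Quotient.mk (MulAction.orbitRel Γ V) v).out with hrepdef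
  have hrep_orbit : ∀ v, ∃ g : Γ, g • v = rep v := by
    intro v
    have h : MulAction.orbitRel Γ V (rep v) v := Quotient.exact (Quotient.out_eq _)
    exact MulAction.orbitRel_apply.mp h
  have hrep_smul : ∀ (γ : Γ) (v : V), rep (γ • v) = rep v := by
    intro γ v
    have h : (Quotient.mk (MulAction.orbitRel Γ V) (γ • v)) =
        Quotient.mk (MulAction.orbitRel Γ V) v :=
      Quotient.sound (MulAction.mem_orbit v γ)
    simp only [hrepdef, h]
  refine ⟨fun v => if rep v = v then z v else 0, ?_⟩
  funext v
  rw [normMap_apply']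
  obtain ⟨g, hg⟩ := hrep_orbit v
  rw [Finset.sum_eq_single g⁻¹]
  · simp only [inv_inv]
    rw [hrep_smul g v, if_pos hg.symm, hconst]
  · intro γ _ hγ
    rw [if_neg]
    intro hcond
    -- hcond : rep (γ⁻¹ • v) = γ⁻¹ • v
    rw [hrep_smul γ⁻¹ v] at hcond
    have : γ • g • v = v := by
      rw [hg, hcond, smul_inv_smul]
    rw [← mul_smul] at this
    exact hγ (mul_eq_one_iff_eq_inv.mp (hfree (γ * g) v this))
  · intro h
    exact absurd (Finset.mem_univ g⁻¹) h

end AuxLemmas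

/- STATEMENT 3:
Γ a finite group acting freely on a finite nonempty set V; L a Γ-equivariant integer
Laplacian-type matrix (symmetric, nonpositive off-diagonal, zero row sums, equivariant)
with connected support graph.  Then L maps N_Γ·ℤ^V into itself, and the homomorphism
{x ∈ N_Γ·ℤ^V : deg x = 0}/L(N_Γ·ℤ^V) → Jac = ker(deg)/L(ℤ^V) induced by the inclusion is
injective with image exactly N_Γ·Jac. -/
theorem norm_of_jacobian
    (V : Type) [Fintype V] [Nonempty V] (Γ : Type) [Group Γ] [Fintype Γ] [MulAction Γ V]
    (hfree : ∀ (γ : Γ) (v : V), γ • v = v → γ = 1)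
    (L : V → V → ℤ)
    (hsymm : ∀ v w, L v w = L w v)
    (hoffdiag : ∀ v w, v ≠ w → L v w ≤ 0)
    (hrowsum : ∀ v, ∑ w, L v w = 0)
    (hequiv : ∀ (γ : Γ) (v w : V), L (γ • v) (γ • w) = L v w)
    (hconn : (SimpleGraph.fromRel fun v w => L v w ≠ 0).Connected) :
    Submodule.map (lapMap V L) (LinearMap.range (normMap V Γ)) ≤
        LinearMap.range (normMap V Γ) ∧
      Function.Injective (inducedMap V Γ L) ∧
      LinearMap.range (inducedMap V Γ L) = LinearMap.range (normOnJac V Γ L) := by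
  have hcardΓ : ((Fintype.card Γ : ℤ)) ≠ 0 := by
    have : 0 < Fintype.card Γ := Fintype.card_pos
    exact_mod_cast this.ne'
  refine ⟨?_, ?_, ?_⟩
  · -- L maps N·ℤ^V into itself
    rintro _ ⟨_, ⟨y, rfl⟩, rfl⟩
    exact ⟨lapMap V L y, (lap_norm_comm V Γ L hequiv y).symm⟩
  · -- injectivity
    rw [← LinearMap.ker_eq_bot, Submodule.eq_bot_iff]
    intro q hq
    obtain ⟨a, rfl⟩ := Submodule.Quotient.mk_surjective _ q
    rw [LinearMap.mem_ker, inducedMap, Submodule.mapQ_apply,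
      Submodule.Quotient.mk_eq_zero, Submodule.mem_comap] at hq
    obtain ⟨zz, hzz⟩ := hq
    -- hzz : lapMap V L zz = (a : V → ℤ)
    have hzz' : lapMap V L zz = (a : V → ℤ) := by
      exact hzz
    obtain ⟨y, hy⟩ := a.2.1
    have hNa : normMap V Γ (a : V → ℤ) = (Fintype.card Γ : ℤ) • (a : V → ℤ) := by
      rw [← hy, normMap_norm_norm' V Γ, hy]
    have h0 : lapMap V L (normMap V Γ zz - (Fintype.card Γ : ℤ) • zz) = 0 := by
      rw [map_sub, map_smul, lap_norm_comm V Γ L hequiv zz, hzz', hNa, sub_self]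
    have hdegd : degMap V (normMap V Γ zz - (Fintype.card Γ : ℤ) • zz) = 0 := by
      rw [map_sub, map_smul, deg_norm' V Γ, smul_eq_mul, sub_self]
    have hdiff0 : normMap V Γ zz - (Fintype.card Γ : ℤ) • zz = 0 := by
      set d := normMap V Γ zz - (Fintype.card Γ : ℤ) • zz with hd
      have hc : ∀ v w : V, d v = d w :=
        lap_ker_const' V L hsymm hoffdiag hrowsum hconn d h0
      funext v
      have hsum : ∑ w : V, d w = 0 := by rw [← degMap_apply']; exact hdegd
      have : ∑ w : V, d w = (Fintype.card V : ℤ) * d v := by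
        rw [Finset.sum_congr rfl fun w _ => hc w v, Finset.sum_const, Finset.card_univ,
          nsmul_eq_mul]
      rw [this] at hsum
      have hcardV : ((Fintype.card V : ℤ)) ≠ 0 := by
        have : 0 < Fintype.card V := Fintype.card_pos
        exact_mod_cast this.ne'
      have := mul_eq_zero.mp hsum
      simpa [hcardV] using this
    have hzrange : zz ∈ LinearMap.range (normMap V Γ) :=
      norm_range_of_fixed' V Γ hfree zz (by rwa [sub_eq_zero] at hdiff0)
    rw [Submodule.Quotient.mk_eq_zero]
    exact ⟨zz, hzrange, hzz'⟩
  · -- range equality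
    apply le_antisymm
    · rintro _ ⟨q, rfl⟩
      obtain ⟨a, rfl⟩ := Submodule.Quotient.mk_surjective _ q
      obtain ⟨y, hy⟩ := a.2.1
      have hdy : y ∈ LinearMap.ker (degMap V) := by
        rw [LinearMap.mem_ker]
        have h1 : degMap V (normMap V Γ y) = 0 := by
          rw [hy]; exact a.2.2
        rw [deg_norm' V Γ] at h1
        exact (mul_eq_zero.mp h1).resolve_left hcardΓ
      refine ⟨⟨y, hdy⟩, ?_⟩
      rw [inducedMap, Submodule.mapQ_apply]
      show Submodule.Quotient.mk _ = Submodule.Quotient.mk _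
      congr 1
      apply Subtype.ext
      show normMap V Γ y = _
      exact hy
    · rintro _ ⟨⟨y, hy⟩, rfl⟩
      have hmem : normMap V Γ y ∈ subK V Γ := by
        refine ⟨⟨y, rfl⟩, ?_⟩
        show normMap V Γ y ∈ LinearMap.ker (degMap V)
        rw [LinearMap.mem_ker, deg_norm' V Γ]
        rw [LinearMap.mem_ker] at hy
        rw [hy, mul_zero]
      refine ⟨Submodule.Quotient.mk ⟨normMap V Γ y, hmem⟩, ?_⟩
      rw [inducedMap, Submodule.mapQ_apply]
      show Submodule.Quotient.mk _ = Submodule.Quotient.mk _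
      congr 1
end

section
/- Let Γ be a finite abelian group, R = ℤ[Γ], I ⊆ R the augmentation ideal (the kernel of the augmentation map ℤ[Γ] → ℤ), N_Γ the norm element, and R̄ = R/(N_Γ). Then #Γ − N_Γ ∈ I, and the sequence 0 → I/R(#Γ − N_Γ) → R̄/(#Γ)R̄ → ℤ/(#Γ)ℤ → 0 is exact, where the first map is induced by the inclusion I ⊆ R followed by the projections R → R̄ → R̄/(#Γ)R̄, and the second map is induced by the augmentation. -/
section Defs

variable (Γ : Type) [CommGroup Γ] [Fintype Γ]

/-- The element #Γ − N_Γ of ℤ[Γ]. -/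
noncomputable def omegaElt : MonoidAlgebra ℤ Γ :=
  (Fintype.card Γ : MonoidAlgebra ℤ Γ) - normElt Γ

/-- The augmentation followed by reduction mod #Γ: ℤ[Γ] → ℤ/(#Γ)ℤ. -/
noncomputable def augMod : MonoidAlgebra ℤ Γ →+* ZMod (Fintype.card Γ) :=
  (Int.castRingHom (ZMod (Fintype.card Γ))).comp (aug Γ)

end Defs

set_option linter.unusedSectionVars false

section Aux
variable (Γ : Type) [CommGroup Γ] [Fintype Γ]

lemma aug_single (a : Γ) (b : ℤ) : aug Γ (MonoidAlgebra.single a b) = b := by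
  simp [aug, MonoidAlgebra.lift_single]

lemma aug_of (g : Γ) : aug Γ (MonoidAlgebra.of ℤ Γ g) = 1 := by
  simp [aug, MonoidAlgebra.lift_of]

lemma aug_norm : aug Γ (normElt Γ) = Fintype.card Γ := by
  simp [normElt, map_sum, MonoidAlgebra.of_apply, aug_single]

lemma norm_mul_of (g : Γ) : normElt Γ * MonoidAlgebra.of ℤ Γ g = normElt Γ := by
  unfold normElt
  rw [Finset.sum_mul]
  simp_rw [← map_mul]
  exact Equiv.sum_comp (Equiv.mulRight g) (fun γ => MonoidAlgebra.of ℤ Γ γ)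

lemma normElt_mul (r : MonoidAlgebra ℤ Γ) : normElt Γ * r = aug Γ r • normElt Γ := by
  induction r using MonoidAlgebra.induction_linear with
  | zero => simp
  | add f g hf hg => rw [mul_add, hf, hg, map_add, add_smul]
  | single a b =>
      have : (MonoidAlgebra.single a b : MonoidAlgebra ℤ Γ) = b • MonoidAlgebra.of ℤ Γ a := by
        simp [MonoidAlgebra.of_apply, Finsupp.smul_single]
      rw [this, mul_smul_comm, norm_mul_of]
      rw [map_zsmul, aug_of, smul_eq_mul, mul_one]

lemma augMod_norm : augMod Γ (normElt Γ) = 0 := by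
  simp [augMod, aug_norm]

lemma augMod_card : augMod Γ ((Fintype.card Γ : MonoidAlgebra ℤ Γ)) = 0 := by
  simp [augMod]

end Aux


/- STATEMENT 4:
Γ a finite abelian group, R = ℤ[Γ], I = ker(aug) the augmentation ideal, N_Γ the norm
element, R̄ = R/(N_Γ).  Then #Γ − N_Γ ∈ I, and the sequence
  0 → I/R(#Γ − N_Γ) → R̄/(#Γ)R̄ → ℤ/(#Γ)ℤ → 0
is exact (first map induced by I ⊆ R → R̄ → R̄/(#Γ)R̄, second map induced by the
augmentation).  Exactness is expressed on lifts: elements of R̄/(#Γ)R̄ are classes of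
elements of R modulo the ideal (N_Γ, #Γ), and elements of I/R(#Γ − N_Γ) are classes of
elements of I modulo the ideal (#Γ − N_Γ); so the claims are:
 • injectivity of the first map: if x ∈ I maps to 0 in R̄/(#Γ)R̄, i.e. x ∈ (N_Γ, #Γ),
   then x ∈ (#Γ − N_Γ);
 • exactness in the middle: the class of y ∈ R in R̄/(#Γ)R̄ is killed by the augmentation
   map to ℤ/(#Γ)ℤ iff it agrees mod (N_Γ, #Γ) with some x ∈ I;
 • surjectivity of the second map. -/
theorem augmentation_ideal_exact_sequence (Γ : Type) [CommGroup Γ] [Fintype Γ] :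
    omegaElt Γ ∈ RingHom.ker (aug Γ) ∧
      (∀ x ∈ RingHom.ker (aug Γ),
        x ∈ Ideal.span {normElt Γ, (Fintype.card Γ : MonoidAlgebra ℤ Γ)} →
        x ∈ Ideal.span {omegaElt Γ}) ∧
      (∀ y : MonoidAlgebra ℤ Γ,
        augMod Γ y = 0 ↔ ∃ x ∈ RingHom.ker (aug Γ),
          y - x ∈ Ideal.span {normElt Γ, (Fintype.card Γ : MonoidAlgebra ℤ Γ)}) ∧
      Function.Surjective (augMod Γ) := by
  refine ⟨?_, ?_, ?_, ?_⟩
  · rw [RingHom.mem_ker, omegaElt, map_sub, aug_norm, map_natCast, sub_self]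
  · intro x hx hspan
    rw [Ideal.mem_span_pair] at hspan
    obtain ⟨u, v, h⟩ := hspan
    rw [RingHom.mem_ker] at hx
    have haug : aug Γ u = - aug Γ v := by
      have := congrArg (aug Γ) h
      rw [hx, map_add, map_mul, map_mul, aug_norm, map_natCast] at this
      have hcard : 0 < (Fintype.card Γ : ℤ) := by exact_mod_cast Fintype.card_pos
      nlinarith [this]
    rw [Ideal.mem_span_singleton']
    refine ⟨v, ?_⟩
    rw [omegaElt, mul_sub, ← h]
    have h1 : u * normElt Γ = aug Γ u • normElt Γ := by rw [mul_comm, normElt_mul]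
    have h2 : v * normElt Γ = aug Γ v • normElt Γ := by rw [mul_comm, normElt_mul]
    rw [h1, h2, haug, neg_smul]
    abel
  · intro y
    constructor
    · intro hy
      have : ((aug Γ y : ℤ) : ZMod (Fintype.card Γ)) = 0 := hy
      rw [ZMod.intCast_zmod_eq_zero_iff_dvd] at this
      obtain ⟨m, hm⟩ := this
      refine ⟨y - (m : MonoidAlgebra ℤ Γ) * normElt Γ, ?_, ?_⟩
      · rw [RingHom.mem_ker, map_sub, map_mul, map_intCast, aug_norm, hm]
        push_cast
        ring
      · rw [sub_sub_cancel, Ideal.mem_span_pair]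
        exact ⟨(m : MonoidAlgebra ℤ Γ), 0, by ring⟩
    · rintro ⟨x, hxk, hspan⟩
      rw [Ideal.mem_span_pair] at hspan
      obtain ⟨u, v, h⟩ := hspan
      have : augMod Γ (y - x) = 0 := by
        rw [← h, map_add, map_mul, map_mul, augMod_norm, augMod_card, mul_zero,
          mul_zero, add_zero]
      have hx0 : augMod Γ x = 0 := by
        have : aug Γ x = 0 := hxk
        simp [augMod, this]
      have := congrArg (augMod Γ) (sub_add_cancel y x).symm
      rw [map_add, ‹augMod Γ (y - x) = 0›, hx0, add_zero] at this
      exact this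
  · intro z
    obtain ⟨m, hm⟩ := ZMod.intCast_surjective z
    exact ⟨(m : MonoidAlgebra ℤ Γ), by rw [augMod, RingHom.comp_apply, map_intCast]; exact hm⟩
end

section
/- Let s ≥ 2 and let P = ℤ[T_1,…,T_s,B_1,…,B_s] be the polynomial ring in 2s indeterminates. Let H be the matrix over P with s columns whose rows are the rows of N_s(T_1,…,T_s) together with one additional row (B_1,…,B_s). Then the ideal of P generated by all s×s minors of H equals (Σ_{l=1}^s B_l T_l)·(T_1,…,T_s)^{s−2}, the product of the principal ideal generated by Σ_{l=1}^s B_lT_l and the (s−2)-nd power of the ideal (T_1,…,T_s). (For s = 0 this ideal of maximal minors is the unit ideal, and for s = 1 it is (B_1).) -/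
open MvPolynomial Matrix Finset

namespace NsFit

variable {s : ℕ}

/-- The polynomial ring. -/
abbrev PP (s : ℕ) := MvPolynomial (Fin s ⊕ Fin s) ℤ

noncomputable def TT (l : Fin s) : PP s := X (Sum.inl l)
noncomputable def BB (l : Fin s) : PP s := X (Sum.inr l)

abbrev rho (s : ℕ) := {p : Fin s × Fin s // p.1 < p.2} ⊕ Unit

noncomputable def HH (s : ℕ) : Matrix (rho s) (Fin s) (PP s) := Matrix.of fun r c =>
  match r with
  | Sum.inl q => if c = q.1.1 then -(TT q.1.2) else if c = q.1.2 then TT q.1.1 else 0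
  | Sum.inr _ => BB c

/-- weight function: T-variables have weight 1, B-variables weight 0. -/
def ww (s : ℕ) : Fin s ⊕ Fin s → ℕ := Sum.elim (fun _ => 1) (fun _ => 0)

lemma det_eq_zero_of_rows_orth (hs : 0 < s) (M : Matrix (Fin s) (Fin s) (PP s))
    (h : ∀ i, ∑ c, M i c * TT c = 0) : M.det = 0 := by
  have hmv : M *ᵥ (fun c => TT c) = 0 := funext h
  have h2 : M.adjugate *ᵥ (M *ᵥ (fun c => TT c)) = 0 := by rw [hmv, Matrix.mulVec_zero]
  rw [Matrix.mulVec_mulVec, Matrix.adjugate_mul, Matrix.smul_mulVec,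
    Matrix.one_mulVec] at h2
  have h3 := congrFun h2 ⟨0, hs⟩
  simp only [Pi.smul_apply, smul_eq_mul, Pi.zero_apply] at h3
  rcases mul_eq_zero.mp h3 with h4 | h4
  · exact h4
  · exact absurd h4 (MvPolynomial.X_ne_zero _)

lemma rowsum_eq_zero {a b : Fin s} (hab : a ≠ b) :
    ∑ c, (if c = a then -(TT b) else if c = b then TT a else 0) * TT c = 0 := by
  have h1 : ∑ c, (if c = a then -(TT b) else if c = b then TT a else 0) * TT c
      = ∑ c ∈ ({a, b} : Finset (Fin s)),
          (if c = a then -(TT b) else if c = b then TT a else 0) * TT c := by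
    refine (Finset.sum_subset (Finset.subset_univ _) ?_).symm
    intro c _ hc
    simp only [Finset.mem_insert, Finset.mem_singleton, not_or] at hc
    rw [if_neg hc.1, if_neg hc.2, zero_mul]
  rw [h1, Finset.sum_pair hab, if_pos rfl, if_neg hab.symm, if_pos rfl]
  ring

lemma X_dvd_of_coeff {i : Fin s ⊕ Fin s} {p : PP s}
    (h : ∀ d : (Fin s ⊕ Fin s) →₀ ℕ, d i = 0 → coeff d p = 0) : X i ∣ p := by
  rw [MvPolynomial.X_dvd_iff_modMonomial_eq_zero]
  ext d
  rw [coeff_zero]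
  by_cases hle : Finsupp.single i 1 ≤ d
  · rw [MvPolynomial.coeff_modMonomial_of_le _ hle]
  · rw [MvPolynomial.coeff_modMonomial_of_not_le _ hle]
    apply h
    by_contra hne
    exact hle (Finsupp.single_le_iff.mpr (Nat.one_le_iff_ne_zero.mpr hne))

lemma dvd_of_cross {i j : Fin s ⊕ Fin s} (hij : i ≠ j) {u v : PP s}
    (h : X j * u = X i * v) : X i ∣ u := by
  apply X_dvd_of_coeff
  intro d hd
  have h1 := congrArg (coeff (Finsupp.single j 1 + d)) h
  rw [MvPolynomial.coeff_X_mul, MvPolynomial.coeff_X_mul'] at h1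
  have h2 : i ∉ (Finsupp.single j 1 + d).support := by
    simp [Finsupp.single_apply, (Ne.symm hij), hd]
  rw [if_neg h2] at h1
  exact h1

lemma monomial_mem_pow (k : ℕ) :
    ∀ (d : (Fin s ⊕ Fin s) →₀ ℕ) (a : ℤ), k ≤ Finsupp.weight (ww s) d →
      (monomial d a : PP s) ∈ (Ideal.span (Set.range (TT (s := s)))) ^ k := by
  induction k with
  | zero => intro d a _; simp
  | succ k ih =>
    intro d a hk
    have hex : ∃ l : Fin s, d (Sum.inl l) ≠ 0 := by
      by_contra hco
      push_neg at hco
      have hw : Finsupp.weight (ww s) d = 0 := by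
        rw [Finsupp.weight_apply, Finsupp.sum]
        apply Finset.sum_eq_zero
        intro x _
        rcases x with l | l
        · rw [hco l, zero_smul]
        · simp [ww]
      omega
    obtain ⟨l, hl⟩ := hex
    have hle : Finsupp.single (Sum.inl l : Fin s ⊕ Fin s) 1 ≤ d :=
      Finsupp.single_le_iff.mpr (Nat.one_le_iff_ne_zero.mpr hl)
    have hd' : Finsupp.single (Sum.inl l : Fin s ⊕ Fin s) 1
        + (d - Finsupp.single (Sum.inl l) 1) = d := add_tsub_cancel_of_le hle
    have hmon : (monomial d a : PP s)
        = X (Sum.inl l) * monomial (d - Finsupp.single (Sum.inl l) 1) a := by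
      rw [MvPolynomial.X, MvPolynomial.monomial_mul, one_mul, hd']
    have hwd : Finsupp.weight (ww s) d
        = 1 + Finsupp.weight (ww s) (d - Finsupp.single (Sum.inl l) 1) := by
      conv_lhs => rw [← hd']
      rw [map_add]
      congr 1
      rw [Finsupp.weight_apply, Finsupp.sum_single_index]
      · simp [ww]
      · simp
    rw [hmon, pow_succ']
    refine Ideal.mul_mem_mul (Ideal.subset_span ⟨l, rfl⟩) (ih _ _ ?_)
    omega

lemma mem_pow_of_supp (k : ℕ) (p : PP s)
    (h : ∀ d ∈ p.support, k ≤ Finsupp.weight (ww s) d) :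
    p ∈ (Ideal.span (Set.range (TT (s := s)))) ^ k := by
  rw [p.as_sum]
  exact Submodule.sum_mem _ fun d hd => monomial_mem_pow k d _ (h d hd)

lemma prod_mem_WHS {ι : Type} (t : Finset ι) (f : ι → PP s) (n : ι → ℕ)
    (h : ∀ i ∈ t, f i ∈ weightedHomogeneousSubmodule ℤ (ww s) (n i)) :
    (∏ i ∈ t, f i) ∈ weightedHomogeneousSubmodule ℤ (ww s) (∑ i ∈ t, n i) := by
  classical
  induction t using Finset.cons_induction with
  | empty =>
    simp only [Finset.prod_empty, Finset.sum_empty, mem_weightedHomogeneousSubmodule]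
    exact isWeightedHomogeneous_one ℤ _
  | cons a t ha ih =>
    rw [Finset.prod_cons, Finset.sum_cons]
    exact weightedHomogeneousSubmodule_mul (ww s) _ _ <|
      Submodule.mul_mem_mul (h a (Finset.mem_cons_self a t))
        (ih fun i hi => h i (Finset.mem_cons_of_mem hi))

lemma det_mem_WHS (M : Matrix (Fin s) (Fin s) (PP s)) (wt : Fin s → ℕ)
    (h : ∀ i j, M i j ∈ weightedHomogeneousSubmodule ℤ (ww s) (wt i)) :
    M.det ∈ weightedHomogeneousSubmodule ℤ (ww s) (∑ i, wt i) := by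
  rw [Matrix.det_apply]
  refine Submodule.sum_mem _ fun σ _ => ?_
  rw [Units.smul_def]
  refine Submodule.smul_mem _ _ ?_
  have h1 := prod_mem_WHS Finset.univ (fun i => M (σ i) i) (fun i => wt (σ i))
    (fun i _ => h (σ i) i)
  rwa [Equiv.sum_comp σ wt] at h1

lemma det_updateRow_finset_sum (M : Matrix (Fin s) (Fin s) (PP s)) (i₀ : Fin s)
    {ι : Type} (t : Finset ι) (v : ι → (Fin s → PP s)) :
    (M.updateRow i₀ (∑ c ∈ t, v c)).det = ∑ c ∈ t, (M.updateRow i₀ (v c)).det := by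
  classical
  induction t using Finset.cons_induction with
  | empty =>
    rw [Finset.sum_empty, Finset.sum_empty]
    apply Matrix.det_eq_zero_of_row_eq_zero i₀
    intro j
    rw [Matrix.updateRow_self]
    rfl
  | cons a t ha ih =>
    rw [Finset.sum_cons, Finset.sum_cons, Matrix.det_updateRow_add, ih]

lemma factor (hs : 2 ≤ s) (M : Matrix (Fin s) (Fin s) (PP s)) (i₀ : Fin s)
    (h0 : ∀ c, M i₀ c = BB c)
    (hrow : ∀ i, i ≠ i₀ → ∃ a b : Fin s, a ≠ b ∧
      ∀ c, M i c = if c = a then -(TT b) else if c = b then TT a else 0) :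
    ∃ m : PP s, m ∈ (Ideal.span (Set.range (TT (s := s)))) ^ (s - 2) ∧
      M.det = (∑ l, BB l * TT l) * m ∧
      ∀ c, (M.updateRow i₀ (Pi.single c 1)).det = TT c * m := by
  have hs0 : 0 < s := by omega
  set u : Fin s → PP s := fun c => (M.updateRow i₀ (Pi.single c 1)).det with hu_def
  -- step 1 : updating row i₀ with any vector orthogonal to T gives det 0
  have step1 : ∀ v : Fin s → PP s, (∑ c, v c * TT c = 0) →
      (M.updateRow i₀ v).det = 0 := by
    intro v hv
    apply det_eq_zero_of_rows_orth hs0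
    intro i
    by_cases hi : i = i₀
    · subst hi
      simpa only [Matrix.updateRow_self] using hv
    · obtain ⟨a, b, hab, hM⟩ := hrow i hi
      rw [Matrix.updateRow_ne hi]
      calc ∑ c, M i c * TT c
          = ∑ c, (if c = a then -(TT b) else if c = b then TT a else 0) * TT c := by
            apply Finset.sum_congr rfl; intro c _; rw [hM c]
        _ = 0 := rowsum_eq_zero hab
  -- single-vector sums
  have hsingle : ∀ (b : Fin s) (x : PP s), ∑ c, (Pi.single b x : Fin s → PP s) c * TT c
      = x * TT b := by
    intro b x
    rw [Finset.sum_eq_single b]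
    · rw [Pi.single_eq_same]
    · intro c _ hc
      rw [Pi.single_eq_of_ne hc, zero_mul]
    · intro hb; exact absurd (Finset.mem_univ b) hb
  -- step 2 : the cross relations
  have rel : ∀ a b : Fin s, TT a * u b = TT b * u a := by
    intro a b
    set va : Fin s → PP s := Pi.single a 1 with hva
    set vb : Fin s → PP s := Pi.single b 1 with hvb
    set w : Fin s → PP s := TT a • vb + (-(TT b)) • va with hw
    have hdet0 : (M.updateRow i₀ w).det = 0 := by
      apply step1
      have hc : ∀ c, w c * TT c = TT a * (vb c * TT c) + (-(TT b)) * (va c * TT c) := by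
        intro c
        simp only [hw, Pi.add_apply, Pi.smul_apply, smul_eq_mul]
        ring
      rw [Finset.sum_congr rfl fun c _ => hc c, Finset.sum_add_distrib,
        ← Finset.mul_sum, ← Finset.mul_sum, hsingle, hsingle]
      ring
    have hexp : (M.updateRow i₀ w).det = TT a * u b - TT b * u a := by
      rw [hw, Matrix.det_updateRow_add, Matrix.det_updateRow_smul, Matrix.det_updateRow_smul]
      simp only [hu_def, smul_eq_mul, neg_mul]
      ring
    rw [hexp] at hdet0
    linear_combination hdet0
  -- step 3 : divisibility
  set c0 : Fin s := ⟨0, by omega⟩ with hc0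
  set c1 : Fin s := ⟨1, by omega⟩ with hc1
  have hc01 : (Sum.inl c0 : Fin s ⊕ Fin s) ≠ Sum.inl c1 := by
    simp [hc0, hc1, Fin.ext_iff]
  have hdvd : X (Sum.inl c0) ∣ u c0 := by
    refine dvd_of_cross hc01 (u := u c0) (v := u c1) ?_
    have := rel c1 c0
    simpa [TT] using this
  obtain ⟨m, hm⟩ := hdvd
  have hTc0 : (TT c0 : PP s) ≠ 0 := MvPolynomial.X_ne_zero _
  -- step 4 : u c = TT c * m for every c
  have hu : ∀ c, u c = TT c * m := by
    intro c
    have h1 : TT c0 * u c = TT c0 * (TT c * m) := by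
      rw [← rel c c0]
      rw [show u c0 = TT c0 * m from hm]
      ring
    exact mul_left_cancel₀ hTc0 h1
  -- step 5 : det M = g * m
  have hdetM : M.det = (∑ l, BB l * TT l) * m := by
    set vs : Fin s → Fin s → PP s := fun c => Pi.single c 1 with hvs
    have hrow0 : M i₀ = ∑ c, (BB c) • vs c := by
      funext x
      rw [Finset.sum_apply]
      simp only [hvs, Pi.smul_apply, smul_eq_mul, Pi.single_apply, mul_ite, mul_one, mul_zero]
      rw [Finset.sum_ite_eq, if_pos (Finset.mem_univ x), h0]
    have h1 : M.det = (M.updateRow i₀ (∑ c, (BB c) • vs c)).det := by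
      rw [← hrow0, Matrix.updateRow_eq_self]
    rw [h1, det_updateRow_finset_sum]
    have h2 : ∀ c : Fin s, (M.updateRow i₀ ((BB c) • vs c)).det
        = BB c * (TT c * m) := by
      intro c
      rw [Matrix.det_updateRow_smul, ← hu c]
    rw [Finset.sum_congr rfl fun c _ => h2 c, Finset.sum_mul]
    apply Finset.sum_congr rfl
    intro l _
    ring
  -- step 6 : m is in the (s-2)-nd power of the T-ideal
  refine ⟨m, ?_, hdetM, hu⟩
  have hwhs : u c0 ∈ weightedHomogeneousSubmodule ℤ (ww s) (s - 1) := by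
    have hsum : ∑ i : Fin s, (if i = i₀ then 0 else 1) = s - 1 := by
      rw [← Finset.add_sum_erase _ _ (Finset.mem_univ i₀), if_pos rfl]
      rw [Finset.sum_congr rfl (fun i hi => if_neg (Finset.ne_of_mem_erase hi))]
      simp [Finset.card_erase_of_mem]
    rw [← hsum]
    apply det_mem_WHS
    intro i j
    by_cases hi : i = i₀
    · subst hi
      rw [if_pos rfl, Matrix.updateRow_self]
      rcases eq_or_ne j c0 with hj | hj
      · subst hj
        rw [Pi.single_eq_same, mem_weightedHomogeneousSubmodule]
        exact isWeightedHomogeneous_one ℤ _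
      · rw [Pi.single_eq_of_ne hj]
        exact Submodule.zero_mem _
    · rw [if_neg hi, Matrix.updateRow_ne hi]
      obtain ⟨a, b, hab, hM⟩ := hrow i hi
      rw [hM j]
      have hX : ∀ l : Fin s, (TT l : PP s) ∈ weightedHomogeneousSubmodule ℤ (ww s) 1 := by
        intro l
        rw [mem_weightedHomogeneousSubmodule]
        have := isWeightedHomogeneous_X ℤ (ww s) (Sum.inl l : Fin s ⊕ Fin s)
        simpa [ww, TT] using this
      rcases eq_or_ne j a with hj | hj
      · rw [if_pos hj]
        exact Submodule.neg_mem _ (hX b)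
      · rw [if_neg hj]
        rcases eq_or_ne j b with hj' | hj'
        · rw [if_pos hj']
          exact hX a
        · rw [if_neg hj']
          exact Submodule.zero_mem _
  apply mem_pow_of_supp
  intro d hd
  have hmem : Finsupp.single (Sum.inl c0 : Fin s ⊕ Fin s) 1 + d ∈ (u c0).support := by
    rw [show u c0 = TT c0 * m from hm, TT, MvPolynomial.support_X_mul]
    exact Finset.mem_map.mpr ⟨d, hd, rfl⟩
  rw [mem_weightedHomogeneousSubmodule] at hwhs
  have hwd := hwhs (MvPolynomial.mem_support_iff.mp hmem)
  rw [map_add] at hwd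
  have hws : Finsupp.weight (ww s) (Finsupp.single (Sum.inl c0 : Fin s ⊕ Fin s) 1) = 1 := by
    rw [Finsupp.weight_apply, Finsupp.sum_single_index]
    · simp [ww]
    · simp
  omega

lemma part_A (hs : 2 ≤ s) (r : Fin s → rho s) :
    ((HH s).submatrix r id).det ∈
      Ideal.span {∑ l, BB l * TT l} *
        (Ideal.span (Set.range (TT (s := s)))) ^ (s - 2) := by
  classical
  set M := (HH s).submatrix r id with hM
  by_cases hB : ∃ i, r i = Sum.inr ()
  · obtain ⟨i₀, hi₀⟩ := hB
    by_cases hB2 : ∃ i, i ≠ i₀ ∧ r i = Sum.inr ()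
    · obtain ⟨i, hi, hri⟩ := hB2
      have : M.det = 0 := by
        apply Matrix.det_zero_of_row_eq hi
        funext c
        simp only [hM, Matrix.submatrix_apply, hri, hi₀]
      rw [this]
      exact Ideal.zero_mem _
    · push_neg at hB2
      have h0 : ∀ c, M i₀ c = BB c := by
        intro c
        simp only [hM, Matrix.submatrix_apply, hi₀, id_eq]
        rfl
      have hrow : ∀ i, i ≠ i₀ → ∃ a b : Fin s, a ≠ b ∧
          ∀ c, M i c = if c = a then -(TT b) else if c = b then TT a else 0 := by
        intro i hi
        rcases hq : r i with q | uu
        · exact ⟨q.1.1, q.1.2, ne_of_lt q.2, fun c => by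
            simp only [hM, Matrix.submatrix_apply, hq, id_eq]; rfl⟩
        · exact absurd (by rw [hq]) (hB2 i hi)
      obtain ⟨m, hmI, hdet, -⟩ := factor hs M i₀ h0 hrow
      rw [hdet]
      exact Ideal.mul_mem_mul (Ideal.subset_span rfl) hmI
  · push_neg at hB
    have : M.det = 0 := by
      apply det_eq_zero_of_rows_orth (by omega)
      intro i
      rcases hq : r i with q | uu
      · have hMi : ∀ c, M i c = if c = q.1.1 then -(TT q.1.2) else if c = q.1.2 then TT q.1.1 else 0 := by
          intro c
          simp only [hM, Matrix.submatrix_apply, hq, id_eq]; rfl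
        rw [Finset.sum_congr rfl fun c _ => by rw [hMi c]]
        exact rowsum_eq_zero (ne_of_lt q.2)
      · exact absurd (by rw [hq]) (hB i)
    rw [this]
    exact Ideal.zero_mem _

lemma combinat (hs : 2 ≤ s) (d : Fin s → ℕ) (hd : ∑ v, d v = s - 2) :
    ∃ (σ : Equiv.Perm (Fin s)) (p : Fin s → Fin s),
      (∀ i : Fin s, i.val ≠ 0 → (p i).val < i.val) ∧
      (∀ v : Fin s, (univ.filter (fun i : Fin s => i.val ≠ 0 ∧ p i = v)).card
          = (if v.val = 0 then 1 else 0) + d (σ v)) := by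
  classical
  set σ : Equiv.Perm (Fin s) := (Fin.revPerm).trans (Tuple.sort d) with hσ
  set e : Fin s → ℕ := fun k => d (σ k) with he_def
  have he : ∀ k k' : Fin s, k ≤ k' → e k' ≤ e k := by
    intro k k' hkk
    have h1 : Fin.rev k' ≤ Fin.rev k := Fin.rev_le_rev.mpr hkk
    exact Tuple.monotone_sort d h1
  have hesum : ∑ k, e k = s - 2 := by
    rw [he_def, Equiv.sum_comp σ d, hd]
  set ee : ℕ → ℕ := fun k => if h : k < s then e ⟨k, h⟩ else 0 with hee
  set cc : ℕ → ℕ := fun k => (if k = 0 then 1 else 0) + ee k with hcc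
  set S : ℕ → ℕ := fun v => ∑ k ∈ Finset.range v, cc k with hS
  have hS1 : ∀ v : ℕ, S (v + 1) = 1 + ∑ k ∈ Finset.range (v + 1), ee k := by
    intro v
    rw [hS]
    simp only [hcc]
    rw [Finset.sum_add_distrib]
    congr 1
    rw [Finset.sum_ite_eq' (Finset.range (v+1)) 0 (fun _ => 1)]
    simp
  have hSmono : Monotone S := by
    intro a b hab
    exact Finset.sum_le_sum_of_subset (Finset.range_subset_range.mpr hab)
  have heesum : ∑ k ∈ Finset.range s, ee k = s - 2 := by
    rw [← hesum, ← Fin.sum_univ_eq_sum_range]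
    apply Finset.sum_congr rfl
    intro k _
    simp only [hee, dif_pos k.isLt, Fin.eta]
  have hSs : S s = s - 1 := by
    rcases Nat.exists_eq_succ_of_ne_zero (by omega : s ≠ 0) with ⟨t, ht⟩
    rw [ht] at heesum ⊢
    rw [hS1 t, heesum]
    omega
  have hall : ∀ v : ℕ, v ≤ s - 2 → v + 1 ≤ S (v + 1) := by
    intro v hv
    rw [hS1]
    have : v ≤ ∑ k ∈ Finset.range (v + 1), ee k := by
      by_contra hcon
      push_neg at hcon
      by_cases hv1 : 1 ≤ ee v
      · have hge : ∀ k ∈ Finset.range (v + 1), 1 ≤ ee k := by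
          intro k hk
          rw [Finset.mem_range] at hk
          have hks : k < s := by omega
          have hvs : v < s := by omega
          have := he ⟨k, hks⟩ ⟨v, hvs⟩ (by simpa [Fin.le_def] using by omega)
          simp only [hee, dif_pos hks, dif_pos hvs] at hv1 ⊢
          omega
        have := Finset.card_nsmul_le_sum (Finset.range (v + 1)) ee 1 hge
        simp only [Finset.card_range, smul_eq_mul, mul_one] at this
        have h2 : (Finset.range (v+1)).sum ee = ∑ k ∈ Finset.range (v+1), ee k := rfl
        omega
      · have hzero : ∀ k, v ≤ k → ee k = 0 := by
          intro k hk
          by_cases hks : k < s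
          · have hvs : v < s := by omega
            have := he ⟨v, hvs⟩ ⟨k, hks⟩ (by simpa [Fin.le_def] using hk)
            simp only [hee, dif_pos hks, dif_pos hvs] at hv1 ⊢
            omega
          · simp only [hee, dif_neg hks]
        have hsub : ∑ k ∈ Finset.range s, ee k = ∑ k ∈ Finset.range (v + 1), ee k := by
          refine (Finset.sum_subset (Finset.range_subset_range.mpr (by omega)) ?_).symm
          intro x _ hx
          rw [Finset.mem_range] at hx
          exact hzero x (by omega)
        rw [hsub] at heesum
        omega
    omega
  set F : ℕ → Finset (Fin s) := fun j => univ.filter (fun v => S (v.val + 1) ≤ j) with hF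
  set q : ℕ → ℕ := fun j => (F j).card with hq
  have hFdc : ∀ (j : ℕ) (v v' : Fin s), v' ≤ v → v ∈ F j → v' ∈ F j := by
    intro j v v' hvv hv
    simp only [hF, Finset.mem_filter, Finset.mem_univ, true_and] at hv ⊢
    exact le_trans (hSmono (by omega : v'.val + 1 ≤ v.val + 1)) hv
  have hmem_lt : ∀ j, j ≤ s - 2 → ∀ v ∈ F j, v.val < j := by
    intro j hj v hv
    simp only [hF, Finset.mem_filter, Finset.mem_univ, true_and] at hv
    by_cases hvs : v.val ≤ s - 2
    · have := hall v.val hvs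
      omega
    · have hv1 : v.val = s - 1 := by have := v.isLt; omega
      have : S (v.val + 1) = s - 1 := by
        rw [show v.val + 1 = s by omega, hSs]
      omega
  have hq_le : ∀ j, j ≤ s - 2 → q j ≤ j := by
    intro j hj
    rw [hq]
    calc (F j).card ≤ (Finset.range j).card := by
          apply Finset.card_le_card_of_injOn (fun v => v.val)
          · intro v hv
            simp only [Finset.coe_range, Set.mem_Iio]
            exact hmem_lt j hj v hv
          · intro a _ b _ hab
            exact Fin.ext hab
      _ = j := Finset.card_range j
  have hq_lt_s : ∀ j, j ≤ s - 2 → q j < s := by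
    intro j hj
    have := hq_le j hj
    omega
  have ha : ∀ j, j ≤ s - 2 → j < S (q j + 1) := by
    intro j hj
    by_contra hcon
    push_neg at hcon
    have hvq : (⟨q j, hq_lt_s j hj⟩ : Fin s) ∈ F j := by
      simp only [hF, Finset.mem_filter, Finset.mem_univ, true_and]
      exact hcon
    have hsub : Finset.Iic (⟨q j, hq_lt_s j hj⟩ : Fin s) ⊆ F j := by
      intro v hv
      rw [Finset.mem_Iic] at hv
      exact hFdc j _ v hv hvq
    have := Finset.card_le_card hsub
    rw [Fin.card_Iic] at this
    simp only [hq] at this ⊢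
    omega
  have hb : ∀ j, j ≤ s - 2 → S (q j) ≤ j := by
    intro j hj
    rcases Nat.eq_zero_or_pos (q j) with h0 | hpos
    · rw [h0]
      simp [hS]
    · have hmlt : q j - 1 < s := by have := hq_lt_s j hj; omega
      have hvm : (⟨q j - 1, hmlt⟩ : Fin s) ∈ F j := by
        by_contra hnot
        have hsub : F j ⊆ univ.filter (fun v : Fin s => v.val < q j - 1) := by
          intro v hv
          simp only [Finset.mem_filter, Finset.mem_univ, true_and]
          by_contra hge
          push_neg at hge
          exact hnot (hFdc j v _ (by simpa [Fin.le_def] using hge) hv)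
        have hcard : (univ.filter (fun v : Fin s => v.val < q j - 1)).card ≤ q j - 1 := by
          calc _ ≤ (Finset.range (q j - 1)).card := by
                apply Finset.card_le_card_of_injOn (fun v => v.val)
                · intro v hv
                  simp only [Finset.mem_coe, Finset.mem_filter] at hv
                  simp only [Finset.coe_range, Set.mem_Iio]
                  exact hv.2
                · intro a _ b _ hab
                  exact Fin.ext hab
            _ = q j - 1 := Finset.card_range _
        have := Finset.card_le_card hsub
        have hqj : q j = (F j).card := rfl
        omega
      simp only [hF, Finset.mem_filter, Finset.mem_univ, true_and] at hvm
      calc S (q j) = S (q j - 1 + 1) := by congr 1; omega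
        _ ≤ j := hvm
  have hq_eq : ∀ j, j ≤ s - 2 → ∀ v : Fin s, S v.val ≤ j → j < S (v.val + 1) → q j = v.val := by
    intro j hj v h1 h2
    rcases lt_trichotomy (q j) v.val with h | h | h
    · exfalso
      have : S (q j + 1) ≤ S v.val := hSmono (by omega)
      have := ha j hj
      omega
    · exact h
    · exfalso
      have : S (v.val + 1) ≤ S (q j) := hSmono (by omega)
      have := hb j hj
      omega
  -- the parent map
  set p : Fin s → Fin s := fun i =>
    if h : i.val = 0 then i
    else ⟨q (i.val - 1), hq_lt_s _ (by have := i.isLt; omega)⟩ with hp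
  refine ⟨σ, p, ?_, ?_⟩
  · intro i hi
    simp only [hp, dif_neg hi]
    have h1 := hq_le (i.val - 1) (by have := i.isLt; omega)
    omega
  · intro v
    have hccv : (if v.val = 0 then 1 else 0) + d (σ v) = cc v.val := by
      simp only [hcc, hee, dif_pos v.isLt, Fin.eta, he_def]
    rw [hccv]
    -- count via the interval [S v, S (v+1))
    have hSv1 : S (v.val + 1) ≤ s - 1 := by
      rw [← hSs]
      exact hSmono v.isLt
    have hcard : (Finset.Ico (S v.val) (S (v.val + 1))).card = cc v.val := by
      rw [Nat.card_Ico]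
      have : S (v.val + 1) = S v.val + cc v.val := Finset.sum_range_succ cc v.val
      omega
    rw [← hcard]
    apply Finset.card_bij (fun (i : Fin s) _ => i.val - 1)
    · intro i hi
      simp only [Finset.mem_filter, Finset.mem_univ, true_and] at hi
      obtain ⟨hi0, hpi⟩ := hi
      have hj : i.val - 1 ≤ s - 2 := by have := i.isLt; omega
      have hvq : q (i.val - 1) = v.val := by
        have : (p i).val = v.val := by rw [hpi]
        simpa only [hp, dif_neg hi0] using this
      rw [Finset.mem_Ico]
      constructor
      · rw [← hvq]; exact hb _ hj
      · rw [← hvq]; exact ha _ hj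
    · intro a ha' b hb' hab
      simp only [Finset.mem_filter, Finset.mem_univ, true_and] at ha' hb'
      have : a.val = b.val := by omega
      exact Fin.ext this
    · intro j hj
      rw [Finset.mem_Ico] at hj
      have hjs : j < s - 1 := by omega
      refine ⟨⟨j + 1, by omega⟩, ?_, by simp⟩
      simp only [Finset.mem_filter, Finset.mem_univ, true_and]
      constructor
      · simp
      · have hqv : q j = v.val := hq_eq j (by omega) v hj.1 hj.2
        simp only [hp]
        rw [dif_neg (by omega : ¬ (j + 1 = 0))]
        exact Fin.ext (by simpa using hqv)

lemma pow_span_eq (n : ℕ) :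
    (Ideal.span (Set.range (TT (s := s)))) ^ n
      = Ideal.span {x : PP s | ∃ f : Fin n → Fin s, x = ∏ j, TT (f j)} := by
  induction n with
  | zero =>
    rw [pow_zero, Ideal.one_eq_top]
    symm
    rw [Ideal.eq_top_iff_one]
    exact Ideal.subset_span ⟨Fin.elim0, by simp⟩
  | succ n ih =>
    rw [pow_succ', ih, Ideal.span_mul_span']
    congr 1
    ext x
    constructor
    · rintro ⟨a, ⟨l, rfl⟩, b, ⟨f, rfl⟩, rfl⟩
      exact ⟨Fin.cons l f, by rw [Fin.prod_univ_succ]; simp⟩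
    · rintro ⟨f, rfl⟩
      refine ⟨TT (f 0), ⟨f 0, rfl⟩, ∏ j : Fin n, TT (f j.succ), ⟨fun j => f j.succ, rfl⟩, ?_⟩
      rw [Fin.prod_univ_succ]

lemma part_B_gen (hs : 2 ≤ s) (ff : Fin (s - 2) → Fin s) :
    (∑ l, BB l * TT l) * ∏ j, TT (ff j) ∈
      Ideal.span {x : PP s | ∃ r : Fin s → rho s, x = ((HH s).submatrix r id).det} := by
  classical
  set L := Ideal.span {x : PP s | ∃ r : Fin s → rho s, x = ((HH s).submatrix r id).det} with hL
  set d : Fin s → ℕ := fun v => (univ.filter fun j => ff j = v).card with hd_def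
  have hd : ∑ v, d v = s - 2 := by
    have h1 := Finset.card_eq_sum_card_fiberwise
      (f := ff) (s := univ) (t := univ) (fun x _ => Finset.mem_univ _)
    simp only [Finset.card_univ, Fintype.card_fin] at h1
    exact h1.symm
  have hprod : ∏ j, TT (ff j) = ∏ v, TT v ^ d v := by
    rw [Finset.prod_comp (fun v => (TT v : PP s)) ff]
    refine Finset.prod_subset (Finset.subset_univ _) ?_
    intro v _ hv
    have h0 : d v = 0 := Finset.card_eq_zero.mpr (by
      rw [Finset.filter_eq_empty_iff]
      exact fun j _ h => hv (Finset.mem_image.mpr ⟨j, Finset.mem_univ _, h⟩))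
    rw [show (univ.filter fun j => ff j = v).card = d v from rfl, h0, pow_zero]
  obtain ⟨σ, p, hplt, hfib⟩ := combinat hs d hd
  set i₀ : Fin s := ⟨0, by omega⟩ with hi₀
  have hne : ∀ i : Fin s, i.val ≠ 0 → σ (p i) ≠ σ i := by
    intro i hi h
    have h1 := hplt i hi
    have h2 := congrArg Fin.val (σ.injective h)
    omega
  set r : Fin s → rho s := fun i =>
    if h : i.val = 0 then Sum.inr ()
    else if hab : σ (p i) < σ i then Sum.inl ⟨(σ (p i), σ i), hab⟩
    else Sum.inl ⟨(σ i, σ (p i)),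
      lt_of_le_of_ne (not_lt.mp hab) (Ne.symm (hne i h))⟩ with hr
  set M := (HH s).submatrix r id with hM
  have hdetL : M.det ∈ L := Ideal.subset_span ⟨r, rfl⟩
  have hvne : ∀ i : Fin s, i ≠ i₀ ↔ i.val ≠ 0 := by
    intro i
    simp [ne_eq, Fin.ext_iff, hi₀]
  have h0 : ∀ c, M i₀ c = BB c := by
    intro c
    simp only [hM, Matrix.submatrix_apply, hr, dif_pos (show (i₀ : Fin s).val = 0 from rfl)]
    rfl
  have hrow : ∀ i, i ≠ i₀ → ∃ a b : Fin s, a ≠ b ∧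
      ∀ c, M i c = if c = a then -(TT b) else if c = b then TT a else 0 := by
    intro i hi
    have hi' : i.val ≠ 0 := (hvne i).mp hi
    by_cases hab : σ (p i) < σ i
    · refine ⟨σ (p i), σ i, hne i hi', fun c => ?_⟩
      simp only [hM, Matrix.submatrix_apply, hr, dif_neg hi', dif_pos hab]
      rfl
    · refine ⟨σ i, σ (p i), Ne.symm (hne i hi'), fun c => ?_⟩
      simp only [hM, Matrix.submatrix_apply, hr, dif_neg hi', dif_neg hab]
      rfl
  obtain ⟨m, hmI, hdet, hu⟩ := factor hs M i₀ h0 hrow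
  set A := M.updateRow i₀ (Pi.single (σ i₀) (1 : PP s)) with hA
  have hAdet : A.det = TT (σ i₀) * m := hu (σ i₀)
  -- lower triangularity
  have hlow : (A.submatrix id ⇑σ).BlockTriangular OrderDual.toDual := by
    intro i j hij
    rw [OrderDual.toDual_lt_toDual] at hij
    rw [Matrix.submatrix_apply, id_eq]
    by_cases hi : i = i₀
    · subst hi
      rw [hA, Matrix.updateRow_self]
      exact Pi.single_eq_of_ne (σ.injective.ne (ne_of_gt hij)) _
    · rw [hA, Matrix.updateRow_ne hi]
      have hi' : i.val ≠ 0 := (hvne i).mp hi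
      have hj1 : σ j ≠ σ (p i) := by
        refine σ.injective.ne fun hh => ?_
        have := hplt i hi'
        have h2 := congrArg Fin.val hh
        rw [Fin.lt_def] at hij
        omega
      have hj2 : σ j ≠ σ i := σ.injective.ne (ne_of_gt hij)
      by_cases hab : σ (p i) < σ i
      · simp only [hM, Matrix.submatrix_apply, hr, dif_neg hi', dif_pos hab]
        show (if σ j = σ (p i) then _ else if σ j = σ i then _ else 0) = 0
        rw [if_neg hj1, if_neg hj2]
      · simp only [hM, Matrix.submatrix_apply, hr, dif_neg hi', dif_neg hab]
        show (if σ j = σ i then _ else if σ j = σ (p i) then _ else 0) = 0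
        rw [if_neg hj2, if_neg hj1]
  have hdiagW : (A.submatrix id ⇑σ).det = ∏ i, A i (σ i) :=
    Matrix.det_of_lowerTriangular _ hlow
  -- diagonal entries
  have hW0 : A i₀ (σ i₀) = 1 := by
    rw [hA, Matrix.updateRow_self, Pi.single_eq_same]
  have hWi : ∀ i, i ≠ i₀ →
      A i (σ i) = (if σ (p i) < σ i then (1 : PP s) else -1) * TT (σ (p i)) := by
    intro i hi
    have hi' : i.val ≠ 0 := (hvne i).mp hi
    rw [hA, Matrix.updateRow_ne hi]
    by_cases hab : σ (p i) < σ i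
    · simp only [hM, Matrix.submatrix_apply, hr, dif_neg hi', dif_pos hab]
      show (if σ i = σ (p i) then -(TT (σ i)) else if σ i = σ i then TT (σ (p i)) else 0) = _
      rw [if_neg (Ne.symm (hne i hi')), if_pos rfl, if_pos hab, one_mul]
    · simp only [hM, Matrix.submatrix_apply, hr, dif_neg hi', dif_neg hab]
      show (if σ i = σ i then -(TT (σ (p i))) else _) = _
      rw [if_pos rfl, if_neg hab]
      ring
  -- the product of the diagonal
  set E : PP s := ∏ i ∈ univ.erase i₀, (if σ (p i) < σ i then (1 : PP s) else -1) with hE_def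
  have hTprod : ∏ i ∈ univ.erase i₀, TT (σ (p i)) = TT (σ i₀) * ∏ v, TT v ^ d v := by
    rw [Finset.prod_comp (fun v => (TT (σ v) : PP s)) p]
    have hfilter : ∀ v : Fin s, ((univ.erase i₀).filter fun i => p i = v)
        = univ.filter (fun i : Fin s => i.val ≠ 0 ∧ p i = v) := by
      intro v
      ext i
      simp only [Finset.mem_filter, Finset.mem_erase, Finset.mem_univ, true_and, and_true,
        and_comm]
      rw [hvne i]
    have hexp : ∀ v : Fin s, (((univ.erase i₀).filter fun i => p i = v)).card
        = (if v.val = 0 then 1 else 0) + d (σ v) := by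
      intro v
      rw [hfilter v]
      exact hfib v
    have h1 : ∏ v ∈ (univ.erase i₀).image p, TT (σ v) ^ (((univ.erase i₀).filter fun i => p i = v)).card
        = ∏ v ∈ (univ.erase i₀).image p, TT (σ v) ^ ((if v.val = 0 then 1 else 0) + d (σ v)) :=
      Finset.prod_congr rfl fun v _ => by rw [hexp v]
    rw [h1]
    have h2 : ∏ v ∈ (univ.erase i₀).image p, TT (σ v) ^ ((if v.val = 0 then 1 else 0) + d (σ v))
        = ∏ v : Fin s, TT (σ v) ^ ((if v.val = 0 then 1 else 0) + d (σ v)) := by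
      refine Finset.prod_subset (Finset.subset_univ _) ?_
      intro v _ hv
      have h0 : (if v.val = 0 then 1 else 0) + d (σ v) = 0 := by
        rw [← hfib v]
        apply Finset.card_eq_zero.mpr
        rw [Finset.filter_eq_empty_iff]
        intro i _ hi
        apply hv
        refine Finset.mem_image.mpr ⟨i, ?_, hi.2⟩
        rw [Finset.mem_erase]
        exact ⟨(hvne i).mpr hi.1, Finset.mem_univ i⟩
      rw [h0, pow_zero]
    rw [h2]
    simp only [pow_add]
    rw [Finset.prod_mul_distrib]
    congr 1
    · rw [Finset.prod_eq_single i₀]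
      · rw [if_pos (show (i₀ : Fin s).val = 0 from rfl), pow_one]
      · intro v _ hv
        rw [if_neg ((hvne v).mp hv), pow_zero]
      · intro h; exact absurd (Finset.mem_univ i₀) h
    · exact Equiv.prod_comp σ (fun v => TT v ^ d v)
  have hdiag2 : ∏ i, A i (σ i) = E * (TT (σ i₀) * ∏ v, TT v ^ d v) := by
    rw [← Finset.mul_prod_erase univ (fun i => A i (σ i)) (Finset.mem_univ i₀), hW0, one_mul]
    rw [Finset.prod_congr rfl (fun i hi => hWi i (Finset.ne_of_mem_erase hi)),
      Finset.prod_mul_distrib, ← hE_def, hTprod]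
  have hEval : E = 1 ∨ E = -1 := by
    refine Finset.prod_induction _ (fun x => x = 1 ∨ x = -1) ?_ (Or.inl rfl) ?_
    · rintro a b (rfl | rfl) (rfl | rfl) <;> simp
    · intro i _
      split <;> simp
  -- determinant under column permutation
  have hperm := Matrix.det_permute' σ A
  rw [hdiagW, hdiag2, hAdet] at hperm
  -- conclusion
  rw [hprod]
  have hz := Int.units_eq_one_or (Equiv.Perm.sign σ)
  have hT0 : (TT (σ i₀) : PP s) ≠ 0 := MvPolynomial.X_ne_zero _
  rcases hz with hz | hz <;> rw [hz] at hperm <;>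
    rcases hEval with hE1 | hE1 <;> rw [hE1] at hperm <;>
    simp only [Units.val_one, Units.val_neg, Int.cast_one, Int.cast_neg, one_mul, neg_mul,
      neg_neg, one_mul, neg_inj] at hperm
  · -- sign = 1, E = 1  : E*(T*∏) = T*m
    have hm : m = ∏ v, TT v ^ d v := by
      apply mul_left_cancel₀ hT0
      rw [hperm]
    rw [← hm, ← hdet]
    exact hdetL
  · -- sign = 1, E = -1 : -(T*∏) = T*m
    have hm : m = -∏ v, TT v ^ d v := by
      apply mul_left_cancel₀ hT0
      linear_combination -hperm
    have : (∑ l, BB l * TT l) * ∏ v, TT v ^ d v = -M.det := by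
      rw [hdet, hm]; ring
    rw [this]
    exact neg_mem hdetL
  · -- sign = -1, E = 1 : T*∏ = -(T*m)
    have hm : m = -∏ v, TT v ^ d v := by
      apply mul_left_cancel₀ hT0
      linear_combination hperm
    have : (∑ l, BB l * TT l) * ∏ v, TT v ^ d v = -M.det := by
      rw [hdet, hm]; ring
    rw [this]
    exact neg_mem hdetL
  · -- sign = -1, E = -1 : T*m = T*∏  (after simplification)
    have hm : m = ∏ v, TT v ^ d v := by
      apply mul_left_cancel₀ hT0
      rw [← neg_inj] at hperm
      linear_combination hperm
    rw [← hm, ← hdet]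
    exact hdetL

lemma main (hs : 2 ≤ s) :
    Ideal.span {x : PP s | ∃ r : Fin s → rho s, x = ((HH s).submatrix r id).det}
      = Ideal.span {∑ l, BB l * TT l} *
          (Ideal.span (Set.range (TT (s := s)))) ^ (s - 2) := by
  apply le_antisymm
  · rw [Ideal.span_le]
    rintro x ⟨r, rfl⟩
    exact part_A hs r
  · refine Ideal.mul_le.mpr ?_
    intro a ha y hy
    rw [Ideal.mem_span_singleton'] at ha
    obtain ⟨c, rfl⟩ := ha
    rw [mul_assoc]
    refine Ideal.mul_mem_left _ c ?_
    rw [pow_span_eq (s - 2)] at hy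
    refine Submodule.span_induction ?_ ?_ ?_ ?_ hy
    · rintro x ⟨f, rfl⟩
      exact part_B_gen hs f
    · rw [mul_zero]
      exact Submodule.zero_mem _
    · intro x z _ _ hx hz
      rw [mul_add]
      exact add_mem hx hz
    · intro z x _ hx
      rw [smul_eq_mul, ← mul_assoc, mul_comm _ z, mul_assoc]
      exact Ideal.mul_mem_left _ z hx

end NsFit

/- STATEMENT 8:
P = ℤ[T_1,…,T_s,B_1,…,B_s] (realized as `MvPolynomial (Fin s ⊕ Fin s) ℤ`, with
T l = X (inl l), B l = X (inr l)).  H is the matrix with s columns whose rows are the rows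
of N_s(T_1,…,T_s) (for each pair l < l', entry −T_{l'} in column l, T_l in column l')
together with one additional row (B_1,…,B_s).  For s ≥ 2, the ideal of s×s minors of H is
(Σ_l B_l T_l)·(T_1,…,T_s)^{s−2}. -/
theorem fitting_ideal_of_Ns_with_B_row
    (s : ℕ) (hs : 2 ≤ s) :
    letI P := MvPolynomial (Fin s ⊕ Fin s) ℤ
    letI T : Fin s → P := fun l => MvPolynomial.X (Sum.inl l)
    letI B : Fin s → P := fun l => MvPolynomial.X (Sum.inr l)
    letI ρ := {p : Fin s × Fin s // p.1 < p.2} ⊕ Unit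
    letI H : Matrix ρ (Fin s) P := Matrix.of fun r c =>
      match r with
      | Sum.inl q => if c = q.1.1 then -(T q.1.2) else if c = q.1.2 then T q.1.1 else 0
      | Sum.inr _ => B c
    Ideal.span {d : P | ∃ r : Fin s → ρ, d = (H.submatrix r id).det} =
      Ideal.span {∑ l, B l * T l} * (Ideal.span (Set.range T)) ^ (s - 2) := by
  exact NsFit.main (s := s) hs
end

section
/- Let s ≥ 0 and consider the matrix N_s(T_1,…,T_s) over the polynomial ring ℤ[T_1,…,T_s]. For every integer i ≥ 0, the i-th Fitting ideal of this matrix, i.e., the ideal generated by all its (s−i)×(s−i) minors (the unit ideal when i ≥ s), is: the unit ideal (1) if i ≥ s; the zero ideal if s ≥ 1 and i = 0; and (T_1,…,T_s)^{s−i} if 1 ≤ i < s. -/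
open MvPolynomial Matrix Pointwise

namespace FittNs

abbrev P (s : ℕ) := MvPolynomial (Fin s) ℤ
abbrev Rho (s : ℕ) := {p : Fin s × Fin s // p.1 < p.2}

noncomputable def Nmat (s : ℕ) : Matrix (Rho s) (Fin s) (P s) :=
  Matrix.of fun q c => if c = q.1.1 then -(X q.1.2) else if c = q.1.2 then X q.1.1 else 0

noncomputable def Fitt (s k : ℕ) : Ideal (P s) :=
  Ideal.span {d : P s | ∃ (r : Fin k → Rho s) (c : Fin k → Fin s),
    d = ((Nmat s).submatrix r c).det}

lemma prod_mem_pow {R : Type*} [CommRing R] (I : Ideal R) :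
    ∀ (n : ℕ) (f : Fin n → R), (∀ a, f a ∈ I) → ∏ a, f a ∈ I ^ n
  | 0, f, _ => by simp
  | n+1, f, h => by
      rw [Fin.prod_univ_succ, pow_succ']
      exact Ideal.mul_mem_mul (h 0) (prod_mem_pow I n (f ∘ Fin.succ) fun a => h _)

lemma det_mem_pow {R : Type*} [CommRing R] {n : ℕ} (I : Ideal R)
    (M : Matrix (Fin n) (Fin n) R) (h : ∀ a b, M a b ∈ I) : M.det ∈ I ^ n := by
  rw [Matrix.det_apply]
  refine Submodule.sum_mem _ fun σ _ => ?_
  rw [Units.smul_def]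
  exact zsmul_mem (prod_mem_pow I n (fun i => M (σ i) i) fun i => h _ _) _

lemma pick (s : ℕ) : ∀ (k : ℕ) (F : Finset (Fin s)) (j : Fin k → Fin s), F.card + k < s →
    ∃ c : Fin k → Fin s, Function.Injective c ∧ (∀ a, c a ∉ F) ∧
      ∀ a b : Fin k, a ≤ b → c a ≠ j b
  | 0, F, j, _ => ⟨fun a => a.elim0, fun a => a.elim0, fun a => a.elim0, fun a => a.elim0⟩
  | k+1, F, j, h => by
      have hcard : (F ∪ Finset.image j Finset.univ).card < s := by
        have h1 := Finset.card_union_le F (Finset.image j Finset.univ)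
        have h2 : (Finset.image j Finset.univ).card ≤ k + 1 := by
          simpa using Finset.card_image_le (s := Finset.univ) (f := j)
        omega
      have hne : (F ∪ Finset.image j Finset.univ)ᶜ.Nonempty := by
        rw [← Finset.card_pos, Finset.card_compl]
        simpa using Nat.sub_pos_of_lt (by simpa using hcard)
      obtain ⟨c0, hc0⟩ := hne
      rw [Finset.mem_compl, Finset.mem_union, not_or] at hc0
      obtain ⟨hc0F, hc0j⟩ := hc0
      obtain ⟨c', hinj, hF', hj'⟩ := pick s k (insert c0 F) (j ∘ Fin.succ)
        (by have := Finset.card_insert_le c0 F; omega)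
      refine ⟨Fin.cons c0 c', ?_, ?_, ?_⟩
      · rw [Fin.cons_injective_iff]
        refine ⟨?_, hinj⟩
        rintro ⟨a, rfl⟩
        exact hF' a (Finset.mem_insert_self _ _)
      · intro a
        refine Fin.cases ?_ ?_ a
        · simpa using hc0F
        · intro a'
          simp only [Fin.cons_succ]
          exact fun hm => hF' a' (Finset.mem_insert_of_mem hm)
      · intro a b hab
        refine Fin.cases ?_ ?_ a hab
        · intro _
          simp only [Fin.cons_zero]
          intro hx
          exact hc0j (by rw [Finset.mem_image]; exact ⟨b, Finset.mem_univ _, hx.symm⟩)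
        · intro a' hab'
          refine Fin.cases ?_ ?_ b hab'
          · intro hle
            exact absurd hle (by simp [Fin.le_def])
          · intro b' hle
            simp only [Fin.cons_succ]
            exact hj' a' b' (by rwa [Fin.succ_le_succ_iff] at hle)

lemma prod_mem_Fitt (s k : ℕ) (hk : k < s) (j : Fin k → Fin s) :
    (∏ a, (X (j a) : P s)) ∈ Fitt s k := by
  obtain ⟨c, hinj, -, hcj⟩ := pick s k ∅ j (by simpa using hk)
  have hne : ∀ a, c a ≠ j a := fun a => hcj a a le_rfl
  set r : Fin k → Rho s := fun a =>
    if h : j a < c a then ⟨(j a, c a), h⟩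
    else ⟨(c a, j a), lt_of_le_of_ne (not_lt.mp h) (hne a)⟩ with hr
  set M := (Nmat s).submatrix r c with hM
  have htri : M.BlockTriangular id := by
    intro a b hba
    have hba' : (b : Fin k) < a := hba
    have h1 : c b ≠ j a := hcj b a (le_of_lt hba')
    have h2 : c b ≠ c a := fun hh => (ne_of_lt hba') (hinj hh)
    show Nmat s (r a) (c b) = 0
    rw [Nmat]
    simp only [Matrix.of_apply, hr]
    by_cases hja : j a < c a
    · rw [dif_pos hja]
      dsimp only
      rw [if_neg h1, if_neg h2]
    · rw [dif_neg hja]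
      dsimp only
      rw [if_neg h2, if_neg h1]
  have hdiag : ∀ a, M a a = (if j a < c a then (1 : P s) else -1) * X (j a) := by
    intro a
    show Nmat s (r a) (c a) = _
    rw [Nmat]
    simp only [Matrix.of_apply, hr]
    by_cases hja : j a < c a
    · rw [dif_pos hja, if_pos hja]
      dsimp only
      rw [if_neg (hne a), if_pos rfl, one_mul]
    · rw [dif_neg hja, if_neg hja]
      dsimp only
      rw [if_pos rfl]
      ring
  have hdet : M.det = (∏ a, (if j a < c a then (1 : P s) else -1)) * ∏ a, X (j a) := by
    rw [Matrix.det_of_upperTriangular htri, ← Finset.prod_mul_distrib]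
    exact Finset.prod_congr rfl fun a _ => hdiag a
  have hE : (∏ a, (if j a < c a then (1 : P s) else -1)) *
      (∏ a, (if j a < c a then (1 : P s) else -1)) = 1 := by
    rw [← Finset.prod_mul_distrib, Finset.prod_eq_one]
    intro a _
    split <;> ring
  have hkey : (∏ a, (X (j a) : P s)) =
      (∏ a, (if j a < c a then (1 : P s) else -1)) * M.det := by
    rw [hdet, ← mul_assoc, hE, one_mul]
  rw [hkey]
  exact Ideal.mul_mem_left _ _ (Ideal.subset_span ⟨r, c, rfl⟩)

lemma Fitt_le_pow (s k : ℕ) :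
    Fitt s k ≤ (Ideal.span (Set.range fun l => (X l : P s))) ^ k := by
  rw [Fitt, Ideal.span_le]
  rintro d ⟨r, c, rfl⟩
  refine det_mem_pow _ _ fun a b => ?_
  show (if c b = (r a).1.1 then -(X (r a).1.2) else if c b = (r a).1.2 then X (r a).1.1 else 0)
      ∈ Ideal.span (Set.range fun l => (X l : P s))
  split
  · exact neg_mem (Ideal.subset_span ⟨_, rfl⟩)
  split
  · exact Ideal.subset_span ⟨_, rfl⟩
  · exact zero_mem _

lemma pow_le_Fitt (s k : ℕ) (hk : k < s) :
    (Ideal.span (Set.range fun l => (X l : P s))) ^ k ≤ Fitt s k := by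
  have key : ∀ m : ℕ, (Ideal.span (Set.range fun l => (X l : P s))) ^ m ≤
      Ideal.span {p : P s | ∃ j : Fin m → Fin s, p = ∏ a, X (j a)} := by
    intro m
    induction m with
    | zero =>
      rw [pow_zero]
      rw [Ideal.one_eq_top, top_le_iff, Ideal.eq_top_iff_one]
      exact Ideal.subset_span ⟨Fin.elim0, by simp⟩
    | succ m ih =>
      rw [pow_succ]
      calc (Ideal.span (Set.range fun l => (X l : P s))) ^ m *
            Ideal.span (Set.range fun l => (X l : P s))
          ≤ Ideal.span {p : P s | ∃ j : Fin m → Fin s, p = ∏ a, X (j a)} *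
            Ideal.span (Set.range fun l => (X l : P s)) := Ideal.mul_mono ih le_rfl
        _ = Ideal.span (({p : P s | ∃ j : Fin m → Fin s, p = ∏ a, X (j a)} *
            (Set.range fun l => (X l : P s)) : Set (P s))) := (Ideal.span_mul_span' _ _)
        _ ≤ Ideal.span {p : P s | ∃ j : Fin (m+1) → Fin s, p = ∏ a, X (j a)} := by
            apply Ideal.span_mono
            rintro z ⟨x, ⟨j, rfl⟩, y, ⟨l, rfl⟩, rfl⟩
            exact ⟨Fin.snoc j l, by rw [Fin.prod_univ_castSucc]; simp⟩
  refine le_trans (key k) (Ideal.span_le.mpr ?_)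
  rintro p ⟨j, rfl⟩
  exact prod_mem_Fitt s k hk j

lemma Fitt_zero_eq_top (s : ℕ) : Fitt s 0 = ⊤ := by
  rw [Ideal.eq_top_iff_one]
  exact Ideal.subset_span ⟨Fin.elim0, Fin.elim0, Matrix.det_isEmpty.symm⟩

lemma Fitt_s_eq_bot (s : ℕ) (hs : 1 ≤ s) : Fitt s s = ⊥ := by
  rw [Fitt, Ideal.span_eq_bot]
  rintro d ⟨r, c, rfl⟩
  by_cases hc : Function.Injective c
  · have hbij : Function.Bijective c := Finite.injective_iff_bijective.mp hc
    set M := (Nmat s).submatrix r c with hM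
    have hmv : M.mulVec (fun b => X (c b)) = 0 := by
      funext a
      show ∑ b, M a b * X (c b) = 0
      have hre : ∑ b, M a b * X (c b)
          = ∑ col, Nmat s (r a) col * X col :=
        Function.Bijective.sum_comp hbij (fun col => Nmat s (r a) col * X col)
      rw [hre]
      obtain ⟨⟨l, l'⟩, hl⟩ := r a
      have hll' : l ≠ l' := ne_of_lt hl
      have hterm : ∀ col, Nmat s (⟨(l, l'), hl⟩ : Rho s) col * X col
          = (if col = l then -(X l' * X col) else 0)
            + (if col = l' then X l * X col else 0) := by
        intro col
        rw [Nmat]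
        simp only [Matrix.of_apply]
        by_cases h1 : col = l
        · subst h1
          rw [if_pos rfl, if_pos rfl, if_neg hll', add_zero]
          ring
        · by_cases h2 : col = l'
          · subst h2
            rw [if_neg h1, if_pos rfl, if_pos rfl, if_neg h1, zero_add]
          · rw [if_neg h1, if_neg h2, if_neg h1, if_neg h2]
            ring
      rw [Finset.sum_congr rfl fun col _ => hterm col, Finset.sum_add_distrib,
        Finset.sum_ite_eq' Finset.univ l fun col => -(X l' * X col),
        Finset.sum_ite_eq' Finset.univ l' fun col => X l * X col]
      simp only [Finset.mem_univ, if_pos]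
      ring
    have hdet : M.det • (fun b => (X (c b) : P s)) = 0 := by
      have h1 : (M.adjugate * M).mulVec (fun b => X (c b)) = 0 := by
        rw [← Matrix.mulVec_mulVec, hmv, Matrix.mulVec_zero]
      rwa [Matrix.adjugate_mul, Matrix.smul_mulVec, Matrix.one_mulVec] at h1
    have h0 : M.det * X (c ⟨0, hs⟩) = 0 := congrFun hdet ⟨0, hs⟩
    rcases mul_eq_zero.mp h0 with h | h
    · exact h
    · exact absurd h (MvPolynomial.X_ne_zero _)
  · rw [Function.not_injective_iff] at hc
    obtain ⟨a, b, hab, hne⟩ := hc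
    exact Matrix.det_zero_of_column_eq hne fun k => by
      show Nmat s (r k) (c a) = Nmat s (r k) (c b)
      rw [hab]

end FittNs

open FittNs
theorem fitting_ideals_of_Ns
    (s : ℕ) (i : ℕ) :
    letI P := MvPolynomial (Fin s) ℤ
    letI T : Fin s → P := fun l => MvPolynomial.X l
    letI ρ := {p : Fin s × Fin s // p.1 < p.2}
    letI N : Matrix ρ (Fin s) P := Matrix.of fun q c =>
      if c = q.1.1 then -(T q.1.2) else if c = q.1.2 then T q.1.1 else 0
    letI FittI : Ideal P := Ideal.span
      {d : P | ∃ (r : Fin (s - i) → ρ) (c : Fin (s - i) → Fin s),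
        d = (N.submatrix r c).det}
    (s ≤ i → FittI = ⊤) ∧
      (1 ≤ s → i = 0 → FittI = ⊥) ∧
      (1 ≤ i → i < s → FittI = (Ideal.span (Set.range T)) ^ (s - i)) := by
  show (s ≤ i → Fitt s (s - i) = ⊤) ∧
      (1 ≤ s → i = 0 → Fitt s (s - i) = ⊥) ∧
      (1 ≤ i → i < s → Fitt s (s - i) =
        (Ideal.span (Set.range fun l => (X l : P s))) ^ (s - i))
  refine ⟨fun h => ?_, fun hs h0 => ?_, fun h1 h2 => ?_⟩
  · rw [Nat.sub_eq_zero_of_le h]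
    exact Fitt_zero_eq_top s
  · subst h0
    rw [Nat.sub_zero]
    exact Fitt_s_eq_bot s hs
  · exact le_antisymm (Fitt_le_pow s _) (pow_le_Fitt s _ (by omega))
end

section
/- Let R be a commutative ring, F a finite free R-module, and h : F → F an R-linear endomorphism. The following are equivalent: (i) h is injective; (ii) det(h) is a non-zero-divisor of R; (iii) the cokernel of h is a torsion R-module, i.e., every element of coker(h) is annihilated by some non-zero-divisor of R. -/
open Matrix Finset

/-- Key induction for McCoy's theorem: if `a ≠ 0` annihilates `a * det M = 0` and all
`k × k` minors of `M`, then `M` has a nontrivial kernel vector. -/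
private lemma mccoy_aux {R : Type*} [CommRing R] {n : Type*} [Fintype n] [DecidableEq n]
    (M : Matrix n n R) (a : R) (ha : a ≠ 0) (hdet : a * M.det = 0) :
    ∀ k : ℕ, (∀ r c : Fin k → n, a * (M.submatrix r c).det = 0) →
      ∃ v : n → R, v ≠ 0 ∧ M.mulVec v = 0 := by
  intro k
  induction k with
  | zero =>
    intro hmin
    exact absurd (by simpa using hmin (fun i => i.elim0) (fun i => i.elim0)) ha
  | succ k ih =>
    intro hmin
    by_cases hk : ∀ r c : Fin k → n, a * (M.submatrix r c).det = 0
    · exact ih hk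
    push_neg at hk
    obtain ⟨r, c, hrc⟩ := hk
    by_cases hex : ∃ c₀, ∀ j, c j ≠ c₀
    · obtain ⟨c₀, hc₀⟩ := hex
      set c' : Fin (k + 1) → n := Fin.snoc c c₀ with hc'
      set coef : Fin (k + 1) → R :=
        fun j => (-1 : R) ^ (j : ℕ) * (a * (M.submatrix r (c' ∘ j.succAbove)).det) with hcoef
      set v : n → R := fun p => ∑ j, if c' j = p then coef j else 0 with hv
      have hcomp : c' ∘ (Fin.last k).succAbove = c := by
        funext l
        simp [c', Fin.succAbove_last, Fin.snoc_castSucc]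
      have hvc₀ : v c₀ = (-1 : R) ^ k * (a * (M.submatrix r c).det) := by
        show (∑ j, if c' j = c₀ then coef j else 0) = _
        rw [Finset.sum_eq_single (Fin.last k)]
        · have h1 : c' (Fin.last k) = c₀ := by simp [c']
          rw [if_pos h1]
          show (-1 : R) ^ ((Fin.last k : ℕ)) *
            (a * (M.submatrix r (c' ∘ (Fin.last k).succAbove)).det) = _
          rw [hcomp, Fin.val_last]
        · intro j _ hj
          obtain ⟨j', rfl⟩ := Fin.exists_castSucc_eq.mpr hj
          rw [if_neg]
          simp only [c', Fin.snoc_castSucc]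
          exact hc₀ j'
        · intro habs
          exact absurd (Finset.mem_univ _) habs
      have hvne : v ≠ 0 := by
        intro h0
        apply hrc
        have hz := congrFun h0 c₀
        rw [hvc₀] at hz
        rcases neg_one_pow_eq_or R k with hh | hh <;> rw [hh] at hz <;> simpa using hz
      refine ⟨v, hvne, ?_⟩
      funext i
      have hz : a * (M.submatrix (Fin.snoc r i) c').det = 0 := hmin _ _
      have step1 : M.mulVec v i = ∑ j, M i (c' j) * coef j := by
        rw [hv]
        simp only [Matrix.mulVec, dotProduct]
        simp_rw [Finset.mul_sum, mul_ite, mul_zero]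
        rw [Finset.sum_comm]
        simp_rw [Finset.sum_ite_eq, Finset.mem_univ, if_true]
      have step2 : (-1 : R) ^ k * (a * (M.submatrix (Fin.snoc r i) c').det)
          = ∑ j, M i (c' j) * coef j := by
        rw [Matrix.det_succ_row _ (Fin.last k), Finset.mul_sum, Finset.mul_sum]
        refine Finset.sum_congr rfl fun j _ => ?_
        have hrow : (M.submatrix (Fin.snoc r i) c') (Fin.last k) j = M i (c' j) := by
          simp [Matrix.submatrix_apply]
        have hminor : (M.submatrix (Fin.snoc r i) c').submatrix
            (Fin.last k).succAbove j.succAbove = M.submatrix r (c' ∘ j.succAbove) := by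
          ext i' j'
          simp [Matrix.submatrix_apply, Fin.succAbove_last, Fin.snoc_castSucc]
        rw [hrow, hminor, hcoef]
        simp only [Fin.val_last]
        have hsign : (-1 : R) ^ k * (-1 : R) ^ (k + (j : ℕ)) = (-1 : R) ^ (j : ℕ) := by
          rw [← pow_add, show k + (k + (j : ℕ)) = 2 * k + (j : ℕ) by ring, pow_add, pow_mul]
          simp
        rw [← hsign]
        ring
      rw [step1, ← step2, hz, mul_zero, Pi.zero_apply]
    · push_neg at hex
      have hcsurj : Function.Surjective c := hex
      have hcinj : Function.Injective c := by
        intro i j hij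
        by_contra hne
        exact hrc (by
          rw [Matrix.det_zero_of_column_eq hne fun l => by simp [hij], mul_zero])
      have hrinj : Function.Injective r := by
        intro i j hij
        by_contra hne
        exact hrc (by
          rw [Matrix.det_zero_of_row_eq hne (funext fun l => by simp [hij]), mul_zero])
      have hcb : Function.Bijective c := ⟨hcinj, hcsurj⟩
      have hcard : Fintype.card (Fin k) = Fintype.card n := Fintype.card_of_bijective hcb
      have hrb : Function.Bijective r := (Fintype.bijective_iff_injective_and_card r).mpr
        ⟨hrinj, hcard⟩
      let f : Fin k ≃ n := Equiv.ofBijective c hcb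
      let e : Fin k ≃ n := Equiv.ofBijective r hrb
      let σ : Equiv.Perm (Fin k) := e.trans f.symm
      have hsub : M.submatrix r c = (M.submatrix f f).submatrix σ id := by
        ext i j
        simp [σ, e, f, Matrix.submatrix_apply, Equiv.ofBijective_apply, Equiv.ofBijective_apply_symm_apply]
      exfalso
      apply hrc
      rw [hsub, Matrix.det_permute, Matrix.det_submatrix_equiv_self, mul_left_comm, hdet,
        mul_zero]

/-- McCoy: an injective square matrix has regular determinant. -/
private lemma matrix_mccoy {R : Type*} [CommRing R] {n : Type*} [Fintype n] [DecidableEq n]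
    (M : Matrix n n R) (hinj : Function.Injective M.mulVec) :
    M.det ∈ nonZeroDivisors R := by
  rw [mem_nonZeroDivisors_iff_right]
  intro a ha
  by_contra ha0
  obtain ⟨v, hv, hMv⟩ := mccoy_aux M a ha0 ha (Fintype.card n + 1) (by
    intro r c
    obtain ⟨i, j, hne, hij⟩ := Fintype.exists_ne_map_eq_of_card_lt r (by simp)
    rw [Matrix.det_zero_of_row_eq hne (funext fun l => by simp [hij]), mul_zero])
  exact hv (hinj (by rw [hMv, Matrix.mulVec_zero]))

/-- Regular determinant implies injective (via adjugate). -/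
private lemma matrix_det_nzd_inj {R : Type*} [CommRing R] {n : Type*} [Fintype n]
    [DecidableEq n] (M : Matrix n n R) (hd : M.det ∈ nonZeroDivisors R) :
    Function.Injective M.mulVec := by
  have hker : ∀ v, M.mulVec v = 0 → v = 0 := by
    intro v hv
    have h1 : (M.adjugate * M).mulVec v = 0 := by
      rw [← Matrix.mulVec_mulVec, hv, Matrix.mulVec_zero]
    rw [Matrix.adjugate_mul, Matrix.smul_mulVec, Matrix.one_mulVec] at h1
    funext i
    have h2 := congrFun h1 i
    simp only [Pi.smul_apply, smul_eq_mul, Pi.zero_apply] at h2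
    exact mem_nonZeroDivisors_iff_right.mp hd _ (by rwa [mul_comm])
  intro u w huw
  have : M.mulVec (u - w) = 0 := by rw [Matrix.mulVec_sub, huw, sub_self]
  have := hker _ this
  exact sub_eq_zero.mp this

theorem injective_iff_det_nonZeroDivisor_iff_torsion_coker
    (R : Type*) [CommRing R] (F : Type*) [AddCommGroup F] [Module R F]
    [Module.Free R F] [Module.Finite R F] (h : F →ₗ[R] F) :
    (Function.Injective h ↔ LinearMap.det h ∈ nonZeroDivisors R) ∧
      (Function.Injective h ↔
        ∀ y : F ⧸ LinearMap.range h, ∃ r ∈ nonZeroDivisors R, r • y = 0) := by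
  classical
  let ι := Module.Free.ChooseBasisIndex R F
  let b : Module.Basis ι R F := Module.Free.chooseBasis R F
  let M : Matrix ι ι R := LinearMap.toMatrix b b h
  have hdetM : M.det = LinearMap.det h := LinearMap.det_toMatrix b h
  have key : ∀ x : F, (b.repr (h x) : ι → R) = M.mulVec (b.repr x) :=
    fun x => (LinearMap.toMatrix_mulVec_repr b b h x).symm
  have hinj : Function.Injective h ↔ Function.Injective M.mulVec := by
    constructor
    · intro hi u w huw
      obtain ⟨x, hx⟩ := b.equivFun.surjective u
      obtain ⟨y, hy⟩ := b.equivFun.surjective w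
      have hux : ⇑(b.repr x) = u := hx ▸ (Module.Basis.equivFun_apply b x).symm
      have hwy : ⇑(b.repr y) = w := hy ▸ (Module.Basis.equivFun_apply b y).symm
      have e1 : (b.repr (h x) : ι → R) = (b.repr (h y) : ι → R) := by
        rw [key, key, hux, hwy, huw]
      have hxy : h x = h y := b.repr.injective (DFunLike.coe_injective e1)
      rw [← hux, ← hwy, hi hxy]
    · intro hm x y hxy
      have e1 : (b.repr x : ι → R) = b.repr y := hm (by rw [← key, ← key, hxy])
      exact b.repr.injective (DFunLike.coe_injective e1)
  have iff1 : Function.Injective h ↔ LinearMap.det h ∈ nonZeroDivisors R := by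
    rw [hinj, ← hdetM]
    exact ⟨fun hi => matrix_mccoy M hi, fun hd => matrix_det_nzd_inj M hd⟩
  have dir2 : LinearMap.det h ∈ nonZeroDivisors R →
      ∀ y : F ⧸ LinearMap.range h, ∃ r ∈ nonZeroDivisors R, r • y = 0 := by
    intro hd y
    obtain ⟨x, rfl⟩ := Submodule.Quotient.mk_surjective _ y
    refine ⟨LinearMap.det h, hd, ?_⟩
    rw [← Submodule.Quotient.mk_smul, Submodule.Quotient.mk_eq_zero]
    refine ⟨Matrix.toLin b b M.adjugate x, ?_⟩
    have hh : h = Matrix.toLin b b M := (Matrix.toLin_toMatrix b b h).symm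
    calc h (Matrix.toLin b b M.adjugate x)
        = Matrix.toLin b b (M * M.adjugate) x := by
          rw [Matrix.toLin_mul b b b, LinearMap.comp_apply, ← hh]
      _ = LinearMap.det h • x := by
          rw [Matrix.mul_adjugate, _root_.map_smul, Matrix.toLin_one, hdetM]
          simp
  have dir3 : (∀ y : F ⧸ LinearMap.range h, ∃ r ∈ nonZeroDivisors R, r • y = 0) →
      LinearMap.det h ∈ nonZeroDivisors R := by
    intro ht
    have H : ∀ i : ι, ∃ r, r ∈ nonZeroDivisors R ∧ ∃ x, h x = r • b i := by
      intro i
      obtain ⟨r, hr, hr0⟩ := ht (Submodule.Quotient.mk (b i))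
      rw [← Submodule.Quotient.mk_smul, Submodule.Quotient.mk_eq_zero] at hr0
      obtain ⟨x, hxx⟩ := hr0
      exact ⟨r, hr, x, hxx⟩
    choose r hrmem x hx using H
    let g : F →ₗ[R] F := b.constr R (fun i => (∏ j ∈ Finset.univ.erase i, r j) • x i)
    have hcomp : h.comp g = (∏ j, r j) • LinearMap.id := by
      apply b.ext
      intro i
      have hgb : h (g (b i)) = (∏ j ∈ Finset.univ.erase i, r j) • (r i • b i) := by
        simp only [g, Module.Basis.constr_basis, _root_.map_smul, hx]
      rw [LinearMap.comp_apply, hgb, smul_smul,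
        Finset.prod_erase_mul _ _ (Finset.mem_univ i)]
      simp
    have hdg : LinearMap.det h * LinearMap.det g = (∏ j, r j) ^ Fintype.card ι := by
      rw [← LinearMap.det_comp, hcomp, ← LinearMap.det_toMatrix b, _root_.map_smul,
        LinearMap.toMatrix_id, Matrix.det_smul, Matrix.det_one, mul_one]
    have hprod : (∏ j, r j) ^ Fintype.card ι ∈ nonZeroDivisors R :=
      pow_mem (prod_mem fun j _ => hrmem j) _
    rw [mem_nonZeroDivisors_iff_right]
    intro z hz
    have hz2 : z * ((∏ j, r j) ^ Fintype.card ι) = 0 := by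
      rw [← hdg, ← mul_assoc, hz, zero_mul]
    exact mem_nonZeroDivisors_iff_right.mp hprod z hz2
  exact ⟨iff1, ⟨fun hi => dir2 (iff1.mp hi), fun ht => iff1.mpr (dir3 ht)⟩⟩
end
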